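/- arXiv:2211.07055 — 8 statements merged into one kernel-verified Lean document; each statement's English description precedes it below -/
import Mathlib

section
/- Let f ∈ ℂ[x_1,…,x_n] be homogeneous of degree d with border Waring rank at most r. Then the dimension of the complex linear span of the first-order partial derivatives ∂f/∂x_1, …, ∂f/∂x_n is at most r (i.e. the number of essential variables of f is at most r). -/
open MvPolynomial

noncomputable section

/-- All Laurent-series coefficients of `F` lie in `ℂ[[ε]]`, i.e. they have
no terms of negative order. -/
def HasRegularCoeffs {σ : Type*} (F : MvPolynomial σ (LaurentSeries ℂ)) : Prop :=
  ∀ (m : σ →₀ ℕ) (k : ℤ), k < 0 → (F.coeff m).coeff k = 0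

/-- `F` has all coefficients in `ℂ[[ε]]` and `F ≡ f (mod ε)`, i.e. substituting
`ε = 0` into the coefficients of `F` yields `f`. -/
def ApproxTo {σ : Type*} (F : MvPolynomial σ (LaurentSeries ℂ)) (f : MvPolynomial σ ℂ) : Prop :=
  HasRegularCoeffs F ∧ ∀ m : σ →₀ ℕ, (F.coeff m).coeff 0 = f.coeff m

/-- The Waring rank of `f` as a form of degree `d`: the least `r` such that `f` is a
sum of `r` `d`-th powers of homogeneous linear forms over `ℂ`. -/
def waringRank {n : ℕ} (f : MvPolynomial (Fin n) ℂ) (d : ℕ) : ℕ :=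
  sInf {r | ∃ ℓ : Fin r → MvPolynomial (Fin n) ℂ,
    (∀ i, (ℓ i).IsHomogeneous 1) ∧ f = ∑ i, ℓ i ^ d}

/-- The border Waring rank of `f` as a form of degree `d`: the least `r` such that there
are homogeneous linear forms `ℓ₁, …, ℓ_r` with coefficients in `ℂ((ε))` whose sum of
`d`-th powers has all coefficients in `ℂ[[ε]]` and is `≡ f (mod ε)`. -/
def borderWaringRank {n : ℕ} (f : MvPolynomial (Fin n) ℂ) (d : ℕ) : ℕ :=
  sInf {r | ∃ ℓ : Fin r → MvPolynomial (Fin n) (LaurentSeries ℂ),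
    (∀ i, (ℓ i).IsHomogeneous 1) ∧ ApproxTo (∑ i, ℓ i ^ d) f}

namespace BWRAux

/-! ### Hahn series coefficient lemmas -/

lemma hahn_sum_coeff {ι : Type*} (s : Finset ι) (f : ι → LaurentSeries ℂ) (a : ℤ) :
    (∑ i ∈ s, f i).coeff a = ∑ i ∈ s, (f i).coeff a := by
  induction s using Finset.cons_induction with
  | empty => simp
  | cons i s hi ih => rw [Finset.sum_cons, Finset.sum_cons, HahnSeries.coeff_add, ih]

lemma hahn_nsmul_coeff (n : ℕ) (x : LaurentSeries ℂ) (a : ℤ) :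
    (n • x).coeff a = n • x.coeff a := by
  induction n with
  | zero => simp
  | succ k ih => rw [succ_nsmul, succ_nsmul, HahnSeries.coeff_add, ih]

lemma hahn_mul_coeff_zero (x y : LaurentSeries ℂ) (hx : ∀ k : ℤ, k < 0 → x.coeff k = 0)
    (hy : ∀ k : ℤ, k < 0 → y.coeff k = 0) :
    (x * y).coeff 0 = x.coeff 0 * y.coeff 0 := by
  rw [HahnSeries.coeff_mul]
  rw [Finset.sum_eq_single ((0 : ℤ), (0 : ℤ))]
  · intro b hb hne
    rw [Finset.mem_addAntidiagonal] at hb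
    exfalso
    apply hne
    have h1 : ¬ b.1 < 0 := fun h => hb.1 (hx _ h)
    have h2 : ¬ b.2 < 0 := fun h => hb.2.1 (hy _ h)
    have h3 : b.1 + b.2 = 0 := hb.2.2
    have hb1 : b.1 = 0 := by omega
    have hb2 : b.2 = 0 := by omega
    exact Prod.ext hb1 hb2
  · intro h
    by_cases hx0 : x.coeff 0 = 0
    · rw [hx0, zero_mul]
    by_cases hy0 : y.coeff 0 = 0
    · rw [hy0, mul_zero]
    exfalso
    exact h (Finset.mem_addAntidiagonal.2 ⟨hx0, hy0, add_zero 0⟩)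

/-! ### MvPolynomial pderiv coefficient lemmas -/

lemma pderiv_coeff {R : Type*} [CommSemiring R] {σ : Type*} (i : σ) (p : MvPolynomial σ R)
    (m : σ →₀ ℕ) :
    (pderiv i p).coeff m = (m i + 1) • p.coeff (m + Finsupp.single i 1) := by
  classical
  induction p using MvPolynomial.induction_on' with
  | add p q hp hq => simp [map_add, coeff_add, hp, hq]
  | monomial s a =>
    rw [pderiv_monomial, coeff_monomial, coeff_monomial]
    by_cases h : s = m + Finsupp.single i 1
    · subst h
      have h1 : (m + Finsupp.single i 1) - Finsupp.single i 1 = m := by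
        ext j
        rw [Finsupp.tsub_apply, Finsupp.add_apply, Finsupp.single_apply]
        split_ifs <;> omega
      have h2 : ((m + Finsupp.single i 1 : σ →₀ ℕ) i : ℕ) = m i + 1 := by
        rw [Finsupp.add_apply, Finsupp.single_eq_same]
      rw [if_pos h1, if_pos rfl, h2, nsmul_eq_mul]
      push_cast
      ring
    · rw [if_neg h, smul_zero]
      split_ifs with h2
      · by_cases hsi : s i = 0
        · rw [hsi]
          simp
        · exfalso
          apply h
          have h4 : s - Finsupp.single i 1 + Finsupp.single i 1 = s :=
            tsub_add_cancel_of_le (Finsupp.single_le_iff.2 (by omega))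
          rw [h2] at h4
          exact h4.symm
      · rfl


/-! ### Finsupp degree lemmas -/

lemma degree_add {σ : Type*} (a b : σ →₀ ℕ) : (a + b).degree = a.degree + b.degree := by
  simp only [Finsupp.degree_eq_weight_one, map_add]

lemma degree_single {σ : Type*} (j : σ) (k : ℕ) : (Finsupp.single j k).degree = k := by
  rcases eq_or_ne k 0 with rfl | h
  · simp [Finsupp.degree]
  · rw [Finsupp.degree_apply, Finsupp.support_single_ne_zero _ h, Finset.sum_singleton,
      Finsupp.single_eq_same]

/-! ### Linear forms -/

lemma pderiv_of_hom1 {σ : Type*} {R : Type*} [CommRing R] (p : MvPolynomial σ R)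
    (hp : p.IsHomogeneous 1) (j : σ) :
    pderiv j p = C (p.coeff (Finsupp.single j 1)) := by
  classical
  ext m
  rw [pderiv_coeff, coeff_C]
  by_cases hm : m = 0
  · subst hm
    simp
  · rw [if_neg (fun h => hm h.symm)]
    have hdeg : (m + Finsupp.single j 1).degree ≠ 1 := by
      rw [degree_add, degree_single]
      have h2 : m.degree ≠ 0 := fun h => hm ((Finsupp.degree_eq_zero_iff m).1 h)
      omega
    rw [hp.coeff_eq_zero hdeg, smul_zero]

lemma isHom_map {σ : Type*} {R S : Type*} [CommSemiring R] [CommSemiring S] (φ : R →+* S)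
    {p : MvPolynomial σ R} {d : ℕ} (hp : p.IsHomogeneous d) :
    (MvPolynomial.map φ p).IsHomogeneous d := by
  intro m hm
  apply hp
  rw [MvPolynomial.coeff_map] at hm
  intro h
  rw [h, map_zero] at hm
  exact hm rfl

/-! ### Vandermonde extraction -/

lemma mem_span_of_matrix {F M : Type*} [Field F] [AddCommGroup M] [Module F M] {s : ℕ}
    (A : Matrix (Fin s) (Fin s) F) (hA : IsUnit A.det) (u v : Fin s → M)
    (h : ∀ t, v t = ∑ i, A t i • u i) (W : Submodule F M) (hv : ∀ t, v t ∈ W) (i : Fin s) :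
    u i ∈ W := by
  have key : ∑ t, A⁻¹ i t • v t = u i := by
    simp_rw [h, Finset.smul_sum, smul_smul]
    rw [Finset.sum_comm]
    calc ∑ j, ∑ t, (A⁻¹ i t * A t j) • u j
        = ∑ j, (∑ t, A⁻¹ i t * A t j) • u j := by simp_rw [Finset.sum_smul]
      _ = ∑ j, ((A⁻¹ * A) i j) • u j := by simp_rw [Matrix.mul_apply]
      _ = ∑ j, ((1 : Matrix (Fin s) (Fin s) F) i j) • u j := by
          rw [Matrix.nonsing_inv_mul A hA]
      _ = u i := by simp [Matrix.one_apply]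
  rw [← key]
  exact Submodule.sum_mem _ fun t _ => Submodule.smul_mem _ _ (hv t)

/-! ### The span of d-th powers of linear forms -/

def Wspan (n d : ℕ) : Submodule ℂ (MvPolynomial (Fin n) ℂ) :=
  Submodule.span ℂ {p | ∃ ℓ : MvPolynomial (Fin n) ℂ, ℓ.IsHomogeneous 1 ∧ p = ℓ ^ d}

lemma monomial_mul_pow_mem {n d : ℕ} :
    ∀ (k : ℕ) (m : Fin n →₀ ℕ), m.degree = k → k ≤ d →
      ∀ ℓ : MvPolynomial (Fin n) ℂ, ℓ.IsHomogeneous 1 →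
      (monomial m 1 : MvPolynomial (Fin n) ℂ) * ℓ ^ (d - k) ∈ Wspan n d := by
  intro k
  induction k with
  | zero =>
    intro m hm _ ℓ hℓ
    have hm0 : m = 0 := (Finsupp.degree_eq_zero_iff m).1 hm
    subst hm0
    rw [Nat.sub_zero]
    have h1 : (monomial (0 : Fin n →₀ ℕ) (1 : ℂ)) = 1 := by simp
    rw [h1, one_mul]
    exact Submodule.subset_span ⟨ℓ, hℓ, rfl⟩
  | succ k ih =>
    intro m hm hkd ℓ hℓ
    have hm0 : m ≠ 0 := by
      intro h
      rw [h, map_zero] at hm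
      omega
    obtain ⟨j, hj⟩ : ∃ j, m j ≠ 0 := by
      by_contra h
      push_neg at h
      exact hm0 (Finsupp.ext h)
    set m' := m - Finsupp.single j 1 with hm'def
    have hmm : m = m' + Finsupp.single j 1 :=
      (tsub_add_cancel_of_le (Finsupp.single_le_iff.2 (by omega))).symm
    have hm'deg : m'.degree = k := by
      have h1 : m.degree = m'.degree + 1 := by
        rw [hmm, degree_add, degree_single]
      omega
    set e := d - k with he
    have he1 : 1 ≤ e := by omega
    set u : Fin (e + 1) → MvPolynomial (Fin n) ℂ :=
      fun i => monomial m' 1 * ((X j) ^ (i : ℕ) * ℓ ^ (e - (i : ℕ))) with hu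
    set A : Matrix (Fin (e + 1)) (Fin (e + 1)) ℂ :=
      Matrix.vandermonde (fun t : Fin (e + 1) => ((t : ℕ) : ℂ)) *
        Matrix.diagonal (fun i : Fin (e + 1) => (e.choose (i : ℕ) : ℂ)) with hA
    have hdet : IsUnit A.det := by
      rw [hA, Matrix.det_mul, Matrix.det_vandermonde, Matrix.det_diagonal, isUnit_iff_ne_zero]
      apply mul_ne_zero
      · apply Finset.prod_ne_zero_iff.2
        intro a _
        apply Finset.prod_ne_zero_iff.2
        intro b hb
        rw [Finset.mem_Ioi] at hb
        have : (b : ℕ) ≠ (a : ℕ) := fun hc => absurd (Fin.val_injective hc) (ne_of_gt hb)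
        intro hc
        rw [sub_eq_zero] at hc
        exact this (Nat.cast_injective hc)
      · apply Finset.prod_ne_zero_iff.2
        intro a _
        exact Nat.cast_ne_zero.mpr (Nat.choose_pos (by omega : (a : ℕ) ≤ e)).ne'
    have hv : ∀ t : Fin (e + 1),
        (monomial m' 1 : MvPolynomial (Fin n) ℂ) * (ℓ + C ((t : ℕ) : ℂ) * X j) ^ e
          = ∑ i, A t i • u i := by
      intro t
      set c : ℂ := ((t : ℕ) : ℂ) with hc
      rw [add_comm ℓ (C c * X j), add_pow, Finset.mul_sum]
      rw [← Fin.sum_univ_eq_sum_range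
        (fun i => monomial m' 1 *
          ((C c * X j) ^ i * ℓ ^ (e - i) * ((e.choose i : ℕ) : MvPolynomial (Fin n) ℂ)))
        (e + 1)]
      apply Finset.sum_congr rfl
      intro i _
      rw [hA, Matrix.mul_apply]
      rw [Finset.sum_eq_single i]
      · rw [Matrix.diagonal_apply_eq, Matrix.vandermonde_apply]
        rw [hu]
        simp only [smul_eq_C_mul, map_mul, map_pow, ← C_eq_coe_nat, ← hc]
        ring
      · intro b _ hb
        rw [Matrix.diagonal_apply_ne _ hb, mul_zero]
      · intro h
        exact absurd (Finset.mem_univ i) h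
    have humem : ∀ i : Fin (e + 1), u i ∈ Wspan n d := by
      intro i
      apply mem_span_of_matrix A hdet u
        (fun t => monomial m' 1 * (ℓ + C ((t : ℕ) : ℂ) * X j) ^ e) hv
      intro t
      have hhom : (ℓ + C ((t : ℕ) : ℂ) * X j).IsHomogeneous 1 := by
        apply hℓ.add
        simpa using (isHomogeneous_C (Fin n) (((t : ℕ) : ℂ))).mul (isHomogeneous_X ℂ j)
      exact ih m' hm'deg (by omega) _ hhom
    have h1 := humem ⟨1, by omega⟩
    rw [hu] at h1
    simp only at h1
    rw [hmm, monomial_add_single]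
    have harr : monomial m' (1 : ℂ) * X j ^ 1 * ℓ ^ (d - (k + 1))
        = monomial m' 1 * (X j ^ ((⟨1, by omega⟩ : Fin (e + 1)) : ℕ)
            * ℓ ^ (e - ((⟨1, by omega⟩ : Fin (e + 1)) : ℕ))) := by
      have : e - 1 = d - (k + 1) := by omega
      rw [mul_assoc]
      norm_num [this]
    rw [harr]
    exact h1

/-! ### Existence of a Waring decomposition over ℂ -/

lemma exists_waring {n d : ℕ} (hd : 0 < d) (f : MvPolynomial (Fin n) ℂ)
    (hf : f.IsHomogeneous d) :
    ∃ (s : ℕ) (ℓ : Fin s → MvPolynomial (Fin n) ℂ),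
      (∀ i, (ℓ i).IsHomogeneous 1) ∧ f = ∑ i, ℓ i ^ d := by
  have hfW : f ∈ Wspan n d := by
    rw [← support_sum_monomial_coeff f]
    apply Submodule.sum_mem
    intro m hm
    have hdeg : m.degree = d := by
      rw [Finsupp.degree_eq_weight_one]
      exact hf (MvPolynomial.mem_support_iff.1 hm)
    have hm0 : m ≠ 0 := by
      intro h
      rw [h, map_zero] at hdeg
      omega
    obtain ⟨j, hj⟩ : ∃ j, m j ≠ 0 := by
      by_contra h
      push_neg at h
      exact hm0 (Finsupp.ext h)
    have key := monomial_mul_pow_mem d m hdeg le_rfl (X j) (isHomogeneous_X ℂ j)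
    rw [Nat.sub_self, pow_zero, mul_one] at key
    have heq : monomial m (coeff m f) = (coeff m f) • (monomial m (1 : ℂ)) := by
      rw [smul_monomial, smul_eq_mul, mul_one]
    rw [heq]
    exact Submodule.smul_mem _ _ key
  obtain ⟨s, c, g, hg⟩ := Submodule.mem_span_set'.1 hfW
  choose ℓ hℓ hgeq using fun i => (g i).2
  choose z hz using fun i => IsAlgClosed.exists_pow_nat_eq (c i) hd
  refine ⟨s, fun i => C (z i) * ℓ i, fun i => by
    simpa using (isHomogeneous_C (Fin n) (z i)).mul (hℓ i), ?_⟩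
  rw [← hg]
  apply Finset.sum_congr rfl
  intro i _
  rw [mul_pow, ← map_pow, hz, ← hgeq, C_mul']

lemma algebraMap_laurent (c : ℂ) :
    (algebraMap ℂ (LaurentSeries ℂ)) c = HahnSeries.single (0 : ℤ) c := by
  rw [HahnSeries.algebraMap_apply', PowerSeries.algebraMap_apply, Algebra.algebraMap_self,
    RingHom.id_apply, HahnSeries.ofPowerSeries_C]
  rfl

/-! ### Independence transfer from residues -/

lemma lin_indep_of_residue {σ : Type*} {m : ℕ} (W : Fin m → MvPolynomial σ (LaurentSeries ℂ))
    (w : Fin m → MvPolynomial σ ℂ)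
    (hreg : ∀ k, HasRegularCoeffs (W k))
    (hres : ∀ k mm, ((W k).coeff mm).coeff 0 = (w k).coeff mm)
    (hind : LinearIndependent ℂ w) : LinearIndependent (LaurentSeries ℂ) W := by
  rw [Fintype.linearIndependent_iff] at hind
  refine (Fintype.linearIndependent_iff (R := LaurentSeries ℂ) (v := W)).mpr ?_
  intro c hc
  by_contra hne
  push_neg at hne
  obtain ⟨k1, hk1⟩ := hne
  classical
  set T : Finset (Fin m) := Finset.univ.filter (fun k => c k ≠ 0) with hT
  have hTne : T.Nonempty := ⟨k1, Finset.mem_filter.2 ⟨Finset.mem_univ _, hk1⟩⟩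
  obtain ⟨k0, hk0T, hk0min⟩ := T.exists_min_image (fun k => (c k).order) hTne
  have hck0 : c k0 ≠ 0 := (Finset.mem_filter.1 hk0T).2
  set N : ℤ := -(c k0).order with hN
  set c' : Fin m → LaurentSeries ℂ := fun k => HahnSeries.single N 1 * c k with hc'
  have hcoeff : ∀ k (j : ℤ), (c' k).coeff j = (c k).coeff (j + (c k0).order) := by
    intro k j
    have hj : j = (j + (c k0).order) + N := by rw [hN]; ring
    rw [hc']
    simp only
    conv_lhs => rw [hj]
    rw [HahnSeries.coeff_single_mul_add, one_mul]
  have hreg' : ∀ k (j : ℤ), j < 0 → (c' k).coeff j = 0 := by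
    intro k j hj
    rw [hcoeff]
    by_cases hk : c k = 0
    · simp [hk]
    · apply HahnSeries.coeff_eq_zero_of_lt_order
      have hle : (c k0).order ≤ (c k).order :=
        hk0min k (Finset.mem_filter.2 ⟨Finset.mem_univ _, hk⟩)
      omega
  have hres0 : (c' k0).coeff 0 ≠ 0 := by
    rw [hcoeff, zero_add]
    exact HahnSeries.coeff_order_eq_zero.not.mpr hck0
  have hsum : ∑ k, c' k • W k = 0 := by
    have hterm : ∀ k : Fin m,
        c' k • W k = (HahnSeries.single N 1 : LaurentSeries ℂ) • (c k • W k) := by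
      intro k
      exact mul_smul (HahnSeries.single N 1 : LaurentSeries ℂ) (c k) (W k)
    rw [Finset.sum_congr rfl (fun k _ => hterm k), ← Finset.smul_sum, hc, smul_zero]
  have hg : ∑ k, ((c' k).coeff 0) • w k = 0 := by
    have hterm : ∀ k : Fin m, ∀ mm : σ →₀ ℕ,
        ((c' k • W k).coeff mm).coeff 0 = ((c' k).coeff 0) * (w k).coeff mm := by
      intro k mm
      rw [MvPolynomial.coeff_smul, smul_eq_mul,
        hahn_mul_coeff_zero _ _ (hreg' k) (fun j hj => hreg k mm j hj), hres]
    ext mm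
    rw [coeff_zero, MvPolynomial.coeff_sum]
    have h2 : ((∑ k, c' k • W k).coeff mm).coeff 0 = 0 := by rw [hsum]; simp
    rw [MvPolynomial.coeff_sum, hahn_sum_coeff] at h2
    rw [← h2]
    apply Finset.sum_congr rfl
    intro k _
    rw [MvPolynomial.coeff_smul, smul_eq_mul, hterm]
  exact hres0 (hind _ hg k0)

end BWRAux

open BWRAux in
/-- A homogeneous polynomial of degree `d` with border Waring rank at most `r` has at
most `r` essential variables, i.e. the span of its first-order partial derivatives
has dimension at most `r`. -/
theorem statement2 {n d r : ℕ} (f : MvPolynomial (Fin n) ℂ) (hf : f.IsHomogeneous d)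
    (hbr : borderWaringRank f d ≤ r) :
    Module.finrank ℂ ↥(Submodule.span ℂ (Set.range fun i : Fin n => pderiv i f)) ≤ r := by
  classical
  by_cases hd : d = 0
  · subst hd
    have hz : ∀ i : Fin n, pderiv i f = 0 := by
      intro i
      ext m
      rw [pderiv_coeff, coeff_zero]
      have hdeg : (m + Finsupp.single i 1).degree ≠ 0 := by
        rw [degree_add, degree_single]
        omega
      rw [hf.coeff_eq_zero hdeg, smul_zero]
    have hbot : Submodule.span ℂ (Set.range fun i : Fin n => pderiv i f) = ⊥ := by
      rw [Submodule.span_eq_bot]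
      rintro x ⟨i, rfl⟩
      exact hz i
    rw [hbot, finrank_bot]
    exact Nat.zero_le r
  · have hd0 : 0 < d := Nat.pos_of_ne_zero hd
    set S : Set ℕ := {r | ∃ ℓ : Fin r → MvPolynomial (Fin n) (LaurentSeries ℂ),
      (∀ i, (ℓ i).IsHomogeneous 1) ∧ ApproxTo (∑ i, ℓ i ^ d) f} with hS
    have hSne : S.Nonempty := by
      obtain ⟨s0, ℓ0, hℓ0, hf0⟩ := exists_waring hd0 f hf
      refine ⟨s0, fun i => MvPolynomial.map (algebraMap ℂ (LaurentSeries ℂ)) (ℓ0 i),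
        fun i => isHom_map _ (hℓ0 i), ?_⟩
      have hFeq : (∑ i, (MvPolynomial.map (algebraMap ℂ (LaurentSeries ℂ)) (ℓ0 i)) ^ d)
          = MvPolynomial.map (algebraMap ℂ (LaurentSeries ℂ)) f := by
        rw [hf0]
        simp only [map_sum, map_pow]
      rw [hFeq]
      have hsingle : ∀ cc : ℂ,
          (algebraMap ℂ (LaurentSeries ℂ)) cc = HahnSeries.single (0 : ℤ) cc := by
        intro cc
        exact algebraMap_laurent cc
      constructor
      · intro m k hk
        rw [MvPolynomial.coeff_map, hsingle, HahnSeries.coeff_single, if_neg (by omega)]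
      · intro m
        rw [MvPolynomial.coeff_map, hsingle, HahnSeries.coeff_single, if_pos rfl]
    have hmem : borderWaringRank f d ∈ S := Nat.sInf_mem hSne
    set s := borderWaringRank f d with hsdef
    obtain ⟨ℓ, hℓhom, hApp⟩ := hmem
    set F : MvPolynomial (Fin n) (LaurentSeries ℂ) := ∑ i, ℓ i ^ d with hFdef
    obtain ⟨hFreg, hFres⟩ := hApp
    by_contra hcon
    push_neg at hcon
    set sp := Submodule.span ℂ (Set.range fun i : Fin n => pderiv i f) with hsp
    have hle : r + 1 ≤ Module.finrank ℂ ↥sp := hcon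
    obtain ⟨u, hu⟩ := exists_linearIndependent_of_le_finrank hle
    set w : Fin (r + 1) → MvPolynomial (Fin n) ℂ := fun k => (u k : MvPolynomial (Fin n) ℂ)
      with hwdef
    have hw : LinearIndependent ℂ w := hu.map' sp.subtype (Submodule.ker_subtype sp)
    have hwmem : ∀ k, w k ∈ sp := fun k => (u k).2
    have hcc : ∀ k, ∃ cc : Fin n → ℂ, ∑ j, cc j • pderiv j f = w k := by
      intro k
      exact (Submodule.mem_span_range_iff_exists_fun ℂ).1 (hwmem k)
    choose cc hcceq using hcc
    set W : Fin (r + 1) → MvPolynomial (Fin n) (LaurentSeries ℂ) :=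
      fun k => ∑ j, (algebraMap ℂ (LaurentSeries ℂ) (cc k j)) • pderiv j F with hWdef
    have hpd_reg : ∀ (j : Fin n) (m : Fin n →₀ ℕ) (k : ℤ), k < 0 →
        ((pderiv j F).coeff m).coeff k = 0 := by
      intro j m k hk
      rw [pderiv_coeff, hahn_nsmul_coeff, hFreg _ _ hk, smul_zero]
    have hpd_res : ∀ (j : Fin n) (m : Fin n →₀ ℕ),
        ((pderiv j F).coeff m).coeff 0 = (pderiv j f).coeff m := by
      intro j m
      rw [pderiv_coeff, pderiv_coeff, hahn_nsmul_coeff, hFres]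
    have hWreg : ∀ k, HasRegularCoeffs (W k) := by
      intro k m kk hkk
      rw [show W k = ∑ j, (algebraMap ℂ (LaurentSeries ℂ) (cc k j)) • pderiv j F from rfl]
      rw [MvPolynomial.coeff_sum, hahn_sum_coeff]
      apply Finset.sum_eq_zero
      intro j _
      rw [MvPolynomial.coeff_smul, smul_eq_mul, algebraMap_laurent,
        HahnSeries.coeff_single_zero_mul, hpd_reg j m kk hkk, mul_zero]
    have hWres : ∀ k (m : Fin n →₀ ℕ), ((W k).coeff m).coeff 0 = (w k).coeff m := by
      intro k m
      rw [show W k = ∑ j, (algebraMap ℂ (LaurentSeries ℂ) (cc k j)) • pderiv j F from rfl]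
      rw [MvPolynomial.coeff_sum, hahn_sum_coeff, ← hcceq k, MvPolynomial.coeff_sum]
      apply Finset.sum_congr rfl
      intro j _
      rw [MvPolynomial.coeff_smul, smul_eq_mul, algebraMap_laurent,
        HahnSeries.coeff_single_zero_mul, hpd_res j m, MvPolynomial.coeff_smul, smul_eq_mul]
    have hWind : LinearIndependent (LaurentSeries ℂ) W := lin_indep_of_residue W w hWreg hWres hw
    set V := Submodule.span (LaurentSeries ℂ) (Set.range fun i : Fin s => ℓ i ^ (d - 1)) with hV
    have hpdV : ∀ j : Fin n, pderiv j F ∈ V := by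
      intro j
      rw [hFdef, map_sum]
      apply Submodule.sum_mem
      intro i _
      rw [pderiv_pow, pderiv_of_hom1 (ℓ i) (hℓhom i) j]
      set a : LaurentSeries ℂ := (ℓ i).coeff (Finsupp.single j 1)
      have heq : (d : MvPolynomial (Fin n) (LaurentSeries ℂ)) * ℓ i ^ (d - 1) * C a
          = ((d : (LaurentSeries ℂ)) * a) • (ℓ i ^ (d - 1)) := by
        rw [smul_eq_C_mul, map_mul]
        have : (C ((d : ℕ) : (LaurentSeries ℂ)) : MvPolynomial (Fin n) (LaurentSeries ℂ)) = ((d : ℕ) : MvPolynomial (Fin n) (LaurentSeries ℂ)) :=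
          C_eq_coe_nat d
        rw [this]
        ring
      rw [heq]
      exact Submodule.smul_mem _ _ (Submodule.subset_span ⟨i, rfl⟩)
    have hWV : ∀ k, W k ∈ V := by
      intro k
      apply Submodule.sum_mem
      intro j _
      exact Submodule.smul_mem _ _ (hpdV j)
    letI fint : Fintype ↥(Set.range (fun i : Fin s => ℓ i ^ (d - 1))) :=
      (Set.finite_range _).fintype
    have hsub : Set.range W ≤ ↑V := by
      rintro x ⟨k, rfl⟩
      exact hWV k
    have hcard := linearIndependent_le_span_aux' W hWind
      (Set.range (fun i : Fin s => ℓ i ^ (d - 1))) hsub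
    have hcard2 : Fintype.card ↥(Set.range (fun i : Fin s => ℓ i ^ (d - 1))) ≤ s := by
      have := Fintype.card_range_le (fun i : Fin s => ℓ i ^ (d - 1))
      rwa [Fintype.card_fin] at this
    rw [Fintype.card_fin] at hcard
    have hsr : s ≤ r := hbr
    omega
end
end

section
/- Let ℓ_1, …, ℓ_m ∈ ℂ[x_1,…,x_n] be nonzero homogeneous linear forms such that ℓ_i is not a scalar multiple of ℓ_j whenever i ≠ j, and let g_1, …, g_m be homogeneous polynomials of degrees r_1 − 1, …, r_m − 1 respectively (r_k ≥ 1). If ∑_{k=1}^m ℓ_k^{d − r_k + 1} g_k = 0 and d ≥ (∑_{k=1}^m r_k) − 1, then g_k = 0 for every k. -/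
open MvPolynomial

noncomputable section

namespace JordanAux

variable {n : ℕ}

lemma single_of_degree_one (s : Fin n →₀ ℕ) (hs : Finsupp.degree s = 1) :
    ∃ i, s = Finsupp.single i 1 := by
  have hs0 : s ≠ 0 := by
    intro h; rw [h, map_zero] at hs; exact one_ne_zero hs.symm
  obtain ⟨i, hi⟩ := Finsupp.ne_iff.mp hs0
  simp only [Finsupp.coe_zero, Pi.zero_apply] at hi
  refine ⟨i, ?_⟩
  have hle : s i ≤ 1 := hs ▸ Finsupp.le_degree i s
  have hsi : s i = 1 := le_antisymm hle (Nat.one_le_iff_ne_zero.mpr hi)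
  ext j
  rcases eq_or_ne j i with rfl | hj
  · simp [hsi]
  · rw [Finsupp.single_eq_of_ne' (Ne.symm hj)]
    by_contra hj0
    have hjmem : j ∈ s.support := Finsupp.mem_support_iff.mpr hj0
    have himem : i ∈ s.support := Finsupp.mem_support_iff.mpr hi
    have hsub : ({i, j} : Finset (Fin n)) ⊆ s.support := by
      intro x hx; simp at hx; rcases hx with rfl | rfl <;> assumption
    have : s i + s j ≤ Finsupp.degree s := by
      rw [Finsupp.degree]
      calc s i + s j = ∑ x ∈ ({i, j} : Finset (Fin n)), s x := by
            rw [Finset.sum_insert (by simp [Ne.symm hj]), Finset.sum_singleton]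
        _ ≤ _ := Finset.sum_le_sum_of_subset hsub
    omega

lemma lin_decomp (ℓ : MvPolynomial (Fin n) ℂ) (h : ℓ.IsHomogeneous 1) :
    ℓ = ∑ i : Fin n, C (coeff (Finsupp.single i 1) ℓ) * X i := by
  ext m
  rw [coeff_sum]
  simp only [coeff_C_mul, coeff_X']
  by_cases hm : ∃ i, m = Finsupp.single i 1
  · obtain ⟨i, rfl⟩ := hm
    rw [Finset.sum_eq_single i]
    · simp
    · intro j _ hj
      have : Finsupp.single j 1 ≠ Finsupp.single i 1 := by
        intro hh
        exact hj (by simpa using (Finsupp.single_left_injective one_ne_zero) hh)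
      simp [this]
    · simp
  · push_neg at hm
    have h1 : coeff m ℓ = 0 := by
      by_contra hc
      have hdeg : m.degree = 1 := by
        by_contra hdeg
        exact hc (h.coeff_eq_zero hdeg)
      obtain ⟨i, hi⟩ := single_of_degree_one m hdeg
      exact hm i hi
    rw [h1]
    refine (Finset.sum_eq_zero ?_).symm
    intro j _
    have : Finsupp.single j 1 ≠ m := fun hh => hm j hh.symm
    simp [this]

/-- Directional derivative along `v`. -/
def Dv (v : Fin n → ℂ) (f : MvPolynomial (Fin n) ℂ) : MvPolynomial (Fin n) ℂ :=
  ∑ i : Fin n, C (v i) * pderiv i f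

lemma Dv_add (v : Fin n → ℂ) (f g : MvPolynomial (Fin n) ℂ) :
    Dv v (f + g) = Dv v f + Dv v g := by
  simp [Dv, map_add, mul_add, Finset.sum_add_distrib]

lemma Dv_zero (v : Fin n → ℂ) : Dv v 0 = 0 := by simp [Dv]

lemma Dv_C (v : Fin n → ℂ) (a : ℂ) : Dv v (C a) = 0 := by simp [Dv, pderiv_C]

lemma Dv_C_mul (v : Fin n → ℂ) (a : ℂ) (f : MvPolynomial (Fin n) ℂ) :
    Dv v (C a * f) = C a * Dv v f := by
  simp only [Dv, pderiv_C_mul, Finset.mul_sum]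
  exact Finset.sum_congr rfl fun i _ => by ring

lemma Dv_mul (v : Fin n → ℂ) (f g : MvPolynomial (Fin n) ℂ) :
    Dv v (f * g) = Dv v f * g + f * Dv v g := by
  simp only [Dv, pderiv_mul, mul_add, Finset.sum_add_distrib, Finset.sum_mul, Finset.mul_sum]
  congr 1 <;> exact Finset.sum_congr rfl fun i _ => by ring

lemma Dv_sum (v : Fin n → ℂ) {ι : Type*} (A : Finset ι) (f : ι → MvPolynomial (Fin n) ℂ) :
    Dv v (∑ i ∈ A, f i) = ∑ i ∈ A, Dv v (f i) := by
  classical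
  induction A using Finset.induction_on with
  | empty => simp [Dv_zero]
  | insert _ _ h ih => rw [Finset.sum_insert h, Finset.sum_insert h, Dv_add, ih]

lemma iter_sum (v : Fin n → ℂ) (s : ℕ) {ι : Type*} (A : Finset ι)
    (f : ι → MvPolynomial (Fin n) ℂ) :
    (Dv v)^[s] (∑ i ∈ A, f i) = ∑ i ∈ A, (Dv v)^[s] (f i) := by
  induction s generalizing f with
  | zero => simp
  | succ s ih =>
    rw [Function.iterate_succ_apply, Dv_sum]
    exact ih _

lemma iter_zero (v : Fin n → ℂ) (s : ℕ) : (Dv v)^[s] (0 : MvPolynomial (Fin n) ℂ) = 0 := by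
  induction s with
  | zero => rfl
  | succ s ih => rw [Function.iterate_succ_apply, Dv_zero, ih]

lemma Dv_pow (v : Fin n → ℂ) (f : MvPolynomial (Fin n) ℂ) (e : ℕ) :
    Dv v (f ^ e) = (e : MvPolynomial (Fin n) ℂ) * f ^ (e - 1) * Dv v f := by
  simp only [Dv, pderiv_pow, Finset.mul_sum]
  rw [Finset.sum_congr rfl]
  intro i _
  ring

lemma pderiv_isHomogeneous {g : MvPolynomial (Fin n) ℂ} {t : ℕ} (h : g.IsHomogeneous t) (i : Fin n) :
    (pderiv i g).IsHomogeneous (t - 1) := by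
  have hdadd : ∀ a b : Fin n →₀ ℕ, Finsupp.degree (a + b) = a.degree + b.degree := by
    intro a b; simp [Finsupp.degree_eq_weight_one, map_add]
  conv_lhs => rw [g.as_sum]
  rw [map_sum]
  apply IsHomogeneous.sum
  intro v hv
  rw [pderiv_monomial]
  rcases Nat.eq_zero_or_pos (v i) with h0 | hpos
  · rw [h0]; simpa using isHomogeneous_zero _ _ _
  · apply isHomogeneous_monomial
    have hdv : v.degree = t := by
      rw [Finsupp.degree_eq_weight_one]; exact h (Finsupp.mem_support_iff.mp hv)
    have hsplit : (v - Finsupp.single i 1) + Finsupp.single i 1 = v := by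
      ext j
      rcases eq_or_ne j i with rfl | hj
      · simp [Finsupp.single_apply]; omega
      · simp [Finsupp.single_eq_of_ne' (Ne.symm hj)]
    have hds : Finsupp.degree (Finsupp.single i (1:ℕ)) = 1 := by
      simp [Finsupp.degree_single, Finsupp.support_single_ne_zero i one_ne_zero]
    have := congrArg Finsupp.degree hsplit
    rw [hdadd, hds, hdv] at this
    omega

lemma Dv_isHomogeneous (v : Fin n → ℂ) {g : MvPolynomial (Fin n) ℂ} {t : ℕ}
    (h : g.IsHomogeneous t) : (Dv v g).IsHomogeneous (t - 1) := by
  apply IsHomogeneous.sum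
  intro i _
  exact ((pderiv_isHomogeneous h i).C_mul _)

lemma homog_zero_eq_C {g : MvPolynomial (Fin n) ℂ} (h : g.IsHomogeneous 0) :
    g = C (coeff 0 g) := by
  ext m
  rcases eq_or_ne m 0 with rfl | hm
  · simp
  · rw [h.coeff_eq_zero (by simpa [Finsupp.degree_eq_zero_iff] using hm), coeff_C,
      if_neg (fun hh => hm hh.symm)]

lemma Dv_kill (v : Fin n → ℂ) {t : ℕ} {g : MvPolynomial (Fin n) ℂ} (h : g.IsHomogeneous t) :
    (Dv v)^[t + 1] g = 0 := by
  induction t generalizing g with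
  | zero =>
    rw [Function.iterate_one, homog_zero_eq_C h, Dv_C]
  | succ t ih =>
    rw [Function.iterate_succ_apply]
    exact ih (by simpa using Dv_isHomogeneous v h)

/-- value of the coefficient functional -/
def lam (ℓ : MvPolynomial (Fin n) ℂ) (v : Fin n → ℂ) : ℂ :=
  ∑ i : Fin n, coeff (Finsupp.single i 1) ℓ * v i

lemma Dv_lin (v : Fin n → ℂ) {ℓ : MvPolynomial (Fin n) ℂ} (h : ℓ.IsHomogeneous 1) :
    Dv v ℓ = C (lam ℓ v) := by
  conv_lhs => rw [lin_decomp ℓ h]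
  rw [Dv_sum, lam, map_sum]
  apply Finset.sum_congr rfl
  intro i _
  rw [Dv_C_mul]
  have : Dv v (X i : MvPolynomial (Fin n) ℂ) = C (v i) := by
    simp only [Dv, pderiv_X]
    rw [Finset.sum_eq_single i]
    · simp
    · intro j _ hj; simp [Pi.single_eq_of_ne (Ne.symm hj)]
    · simp
  rw [this, ← C_mul]

lemma eval_lin (v : Fin n → ℂ) {ℓ : MvPolynomial (Fin n) ℂ} (h : ℓ.IsHomogeneous 1) :
    eval v ℓ = lam ℓ v := by
  conv_lhs => rw [lin_decomp ℓ h]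
  simp [lam]

lemma C_mul_eq_zero {a : ℂ} (ha : a ≠ 0) {f : MvPolynomial (Fin n) ℂ}
    (h : C a * f = 0) : f = 0 := by
  rcases mul_eq_zero.mp h with h1 | h1
  · exact absurd (C_eq_zero.mp h1) ha
  · exact h1

lemma step_inj (v : Fin n → ℂ) {ℓ : MvPolynomial (Fin n) ℂ} {c : ℂ} (hc : c ≠ 0)
    (hD : Dv v ℓ = C c) {e : ℕ} (he : 1 ≤ e) {t : ℕ} {g : MvPolynomial (Fin n) ℂ}
    (hg : g.IsHomogeneous t)
    (h : C ((e : ℂ) * c) * g + ℓ * Dv v g = 0) : g = 0 := by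
  have chain : ∀ k, C (((e + k : ℕ) : ℂ) * c) * (Dv v)^[k] g + ℓ * (Dv v)^[k + 1] g = 0 := by
    intro k
    induction k with
    | zero => simpa using h
    | succ k ih =>
      have hd := congrArg (Dv v) ih
      rw [Dv_add, Dv_mul, Dv_mul, Dv_C, hD, Dv_zero] at hd
      rw [← Function.iterate_succ_apply' (Dv v) k g, ← Function.iterate_succ_apply' (Dv v) (k+1) g]
        at hd
      have : C (((e + (k + 1) : ℕ) : ℂ) * c) * (Dv v)^[k + 1] g + ℓ * (Dv v)^[k + 1 + 1] g
          = C (((e + k : ℕ) : ℂ) * c) * (Dv v)^[k+1] g +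
            (C c * (Dv v)^[k+1] g + ℓ * (Dv v)^[k + 1 + 1] g) := by
        have hcc : (((e + (k + 1) : ℕ) : ℂ)) * c = ((e + k : ℕ) : ℂ) * c + c := by
          push_cast; ring
        rw [hcc, C_add]
        ring
      rw [this]
      rw [zero_mul, zero_add] at hd
      linear_combination hd
  have hkill : (Dv v)^[t + 1] g = 0 := Dv_kill v hg
  have desc : ∀ j, (Dv v)^[t + 1 - j] g = 0 := by
    intro j
    induction j with
    | zero => simpa using hkill
    | succ j ih =>
      rcases le_or_gt (t + 1) j with hj | hj
      · rw [show t + 1 - (j+1) = 0 by omega]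
        rw [show t + 1 - j = 0 by omega] at ih
        exact ih
      · have hch := chain (t - j)
        rw [show t + 1 - j = (t - j) + 1 by omega] at ih
        rw [ih, mul_zero, add_zero] at hch
        rw [show t + 1 - (j + 1) = t - j by omega]
        refine C_mul_eq_zero ?_ hch
        exact mul_ne_zero (Nat.cast_ne_zero.mpr (by omega)) hc
  have := desc (t + 1)
  simpa using this

lemma iter_pow_reg (v : Fin n → ℂ) {ℓ : MvPolynomial (Fin n) ℂ} {c : ℂ} (hc : c ≠ 0)
    (hl : ℓ.IsHomogeneous 1) (hD : Dv v ℓ = C c) :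
    ∀ (s e t : ℕ) (g : MvPolynomial (Fin n) ℂ), s ≤ e → g.IsHomogeneous t →
      ∃ G : MvPolynomial (Fin n) ℂ, (Dv v)^[s] (ℓ ^ e * g) = ℓ ^ (e - s) * G ∧
        G.IsHomogeneous t ∧ (G = 0 → g = 0) := by
  intro s
  induction s with
  | zero => intro e t g _ hg; exact ⟨g, by simp, hg, fun h => h⟩
  | succ s ih =>
    intro e t g hse hg
    have he1 : 1 ≤ e := le_trans (Nat.succ_le_succ (Nat.zero_le s)) hse
    set h₁ : MvPolynomial (Fin n) ℂ := C ((e : ℂ) * c) * g + ℓ * Dv v g with hh₁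
    have hstep : Dv v (ℓ ^ e * g) = ℓ ^ (e - 1) * h₁ := by
      rw [Dv_mul, Dv_pow, hD, hh₁]
      have : ℓ ^ e = ℓ ^ (e - 1) * ℓ := by
        conv_lhs => rw [show e = (e - 1) + 1 by omega]
        rw [pow_succ]
      rw [this]
      have hcast : (e : MvPolynomial (Fin n) ℂ) = C (e : ℂ) :=
        (map_natCast (C : ℂ →+* MvPolynomial (Fin n) ℂ) e).symm
      rw [hcast, C_mul]
      ring
    have hh₁hom : h₁.IsHomogeneous t := by
      rcases Nat.eq_zero_or_pos t with rfl | ht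
      · have : Dv v g = 0 := by rw [homog_zero_eq_C hg, Dv_C]
        rw [hh₁, this, mul_zero, add_zero]
        exact (hg.C_mul _)
      · apply IsHomogeneous.add (hg.C_mul _)
        have hmul := hl.mul (Dv_isHomogeneous v hg)
        have h1t : 1 + (t - 1) = t := by omega
        rwa [h1t] at hmul
    have := ih (e - 1) t h₁ (by omega) hh₁hom
    obtain ⟨G, hG1, hG2, hG3⟩ := this
    refine ⟨G, ?_, hG2, fun h0 => ?_⟩
    · rw [Function.iterate_succ_apply, hstep, hG1]
      congr 2
      omega
    · exact step_inj v hc hD he1 hg (by rw [← hh₁, hG3 h0])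

lemma iter_pow_ker (v : Fin n → ℂ) {ℓ : MvPolynomial (Fin n) ℂ} (hD : Dv v ℓ = 0)
    (s e : ℕ) (g : MvPolynomial (Fin n) ℂ) :
    (Dv v)^[s] (ℓ ^ e * g) = ℓ ^ e * (Dv v)^[s] g := by
  induction s generalizing g with
  | zero => simp
  | succ s ih =>
    rw [Function.iterate_succ_apply, Function.iterate_succ_apply, Dv_mul, Dv_pow, hD,
      mul_zero, zero_mul, zero_add]
    exact ih (Dv v g)

lemma exists_u (a b : Fin n → ℂ) (hb : b ≠ 0) (hnp : ∀ c : ℂ, a ≠ c • b) :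
    ∃ u : Fin n → ℂ, ∑ i, b i * u i = 0 ∧ ∑ i, a i * u i ≠ 0 := by
  by_contra hcon
  push_neg at hcon
  have hall : ∀ u : Fin n → ℂ, ∑ i, b i * u i = 0 → ∑ i, a i * u i = 0 := by
    intro u hu
    by_contra h
    exact h (hcon u hu)
  obtain ⟨i0, hi0⟩ : ∃ i0, b i0 ≠ 0 := by
    by_contra h
    push_neg at h
    exact hb (funext fun i => h i)
  apply hnp (a i0 / b i0)
  funext j
  rcases eq_or_ne j i0 with rfl | hj
  · simp only [Pi.smul_apply, smul_eq_mul]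
    field_simp
  · set u : Fin n → ℂ := fun k => (if k = j then b i0 else 0) - (if k = i0 then b j else 0)
      with hu
    have hsum0 : ∑ i, b i * u i = 0 := by
      simp only [hu, mul_sub, Finset.sum_sub_distrib, mul_ite, mul_zero]
      rw [Finset.sum_ite_eq' Finset.univ j (fun k => b k * b i0),
        Finset.sum_ite_eq' Finset.univ i0 (fun k => b k * b j)]
      simp [mul_comm]
    have hsa := hall u hsum0
    simp only [hu, mul_sub, Finset.sum_sub_distrib, mul_ite, mul_zero] at hsa
    rw [Finset.sum_ite_eq' Finset.univ j (fun k => a k * b i0),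
      Finset.sum_ite_eq' Finset.univ i0 (fun k => a k * b j)] at hsa
    simp only [Finset.mem_univ, if_pos] at hsa
    have hkey : a j * b i0 = a i0 * b j := by linear_combination hsa
    simp only [Pi.smul_apply, smul_eq_mul]
    field_simp
    linear_combination hkey

lemma exists_v (m : ℕ) (a : Fin m → Fin n → ℂ) (b : Fin n → ℂ) (hb : b ≠ 0)
    (hnp : ∀ k, ∀ c : ℂ, a k ≠ c • b) :
    ∃ v : Fin n → ℂ, (∑ i, b i * v i = 0) ∧ ∀ k, ∑ i, a k i * v i ≠ 0 := by
  choose u hu0 hu using fun k => exists_u (a k) b hb (hnp k)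
  set Q : Fin m → Polynomial ℂ := fun k =>
    ∑ j : Fin m, Polynomial.C (∑ i, a k i * u j i) * Polynomial.X ^ (j : ℕ) with hQ
  have hcoeff : ∀ k j : Fin m, (Q k).coeff (j : ℕ) = ∑ i, a k i * u j i := by
    intro k j
    rw [hQ]
    simp only [Polynomial.finset_sum_coeff, Polynomial.coeff_C_mul, Polynomial.coeff_X_pow]
    rw [Finset.sum_eq_single j]
    · simp
    · intro l _ hl
      have : (j : ℕ) ≠ (l : ℕ) := fun h => hl (Fin.ext h.symm)
      simp [this]
    · simp
  have hQne : ∀ k, Q k ≠ 0 := by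
    intro k h0
    apply hu k
    have := hcoeff k k
    rw [h0] at this
    simpa using this.symm
  have hprod : (∏ k, Q k) ≠ 0 := Finset.prod_ne_zero_iff.mpr fun k _ => hQne k
  obtain ⟨t, ht⟩ : ∃ t : ℂ, Polynomial.eval t (∏ k, Q k) ≠ 0 := by
    by_contra hcon
    push_neg at hcon
    apply hprod
    apply Polynomial.eq_zero_of_infinite_isRoot
    have : {x : ℂ | (∏ k, Q k).IsRoot x} = Set.univ := Set.eq_univ_of_forall hcon
    rw [this]
    exact Set.infinite_univ
  have hswap : ∀ w : Fin n → ℂ, ∑ i, w i * (∑ j : Fin m, t ^ (j : ℕ) * u j i)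
      = ∑ j : Fin m, t ^ (j : ℕ) * (∑ i, w i * u j i) := by
    intro w
    simp_rw [Finset.mul_sum]
    rw [Finset.sum_comm]
    exact Finset.sum_congr rfl fun j _ => Finset.sum_congr rfl fun i _ => by ring
  refine ⟨fun i => ∑ j : Fin m, t ^ (j : ℕ) * u j i, ?_, ?_⟩
  · rw [hswap]
    exact Finset.sum_eq_zero fun j _ => by rw [hu0 j, mul_zero]
  · intro k
    rw [hswap]
    have heval : Polynomial.eval t (Q k) = ∑ j : Fin m, t ^ (j : ℕ) * (∑ i, a k i * u j i) := by
      rw [hQ]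
      simp only [Polynomial.eval_finset_sum, Polynomial.eval_mul, Polynomial.eval_C,
        Polynomial.eval_pow, Polynomial.eval_X]
      exact Finset.sum_congr rfl fun j _ => by ring
    rw [← heval]
    rw [Polynomial.eval_prod] at ht
    exact Finset.prod_ne_zero_iff.mp ht k (Finset.mem_univ k)

lemma smul_of_coeff {ℓ₁ ℓ₂ : MvPolynomial (Fin n) ℂ} (h1 : ℓ₁.IsHomogeneous 1)
    (h2 : ℓ₂.IsHomogeneous 1) (c : ℂ)
    (h : ∀ i, coeff (Finsupp.single i 1) ℓ₁ = c * coeff (Finsupp.single i 1) ℓ₂) :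
    ℓ₁ = c • ℓ₂ := by
  rw [lin_decomp ℓ₁ h1, lin_decomp ℓ₂ h2, Finset.smul_sum]
  apply Finset.sum_congr rfl
  intro i _
  rw [h i, smul_eq_C_mul, ← mul_assoc, ← C_mul]

lemma main_aux : ∀ (m n d : ℕ) (ℓ : Fin m → MvPolynomial (Fin n) ℂ)
    (r : Fin m → ℕ) (g : Fin m → MvPolynomial (Fin n) ℂ),
    (∀ i, (ℓ i).IsHomogeneous 1) → (∀ i, ℓ i ≠ 0) →
    (∀ i j, i ≠ j → ∀ c : ℂ, ℓ i ≠ c • ℓ j) →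
    (∀ i, 1 ≤ r i) → (∀ i, (g i).IsHomogeneous (r i - 1)) →
    (∑ i, ℓ i ^ (d + 1 - r i) * g i = 0) → (∑ i, r i ≤ d + 1) →
    ∀ i, g i = 0 := by
  intro m
  induction m with
  | zero => intro n d ℓ r g _ _ _ _ _ _ _ i; exact i.elim0
  | succ m IH =>
    intro n d ℓ r g hhom hne hprop hr hg hsum hd
    have hpair : ∀ k : Fin m, r (Fin.castSucc k) + r (Fin.last m) ≤ d + 1 := by
      intro k
      have hne' : Fin.castSucc k ≠ Fin.last m := Fin.ne_of_lt (Fin.castSucc_lt_last k)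
      calc r (Fin.castSucc k) + r (Fin.last m)
          = ∑ i ∈ ({Fin.castSucc k, Fin.last m} : Finset (Fin (m+1))), r i :=
            (Finset.sum_pair hne').symm
        _ ≤ ∑ i, r i := Finset.sum_le_sum_of_subset (Finset.subset_univ _)
        _ ≤ d + 1 := hd
    have key : ∀ k : Fin m, g (Fin.castSucc k) = 0 := by
      have hb : (fun i => coeff (Finsupp.single i 1) (ℓ (Fin.last m))) ≠ 0 := by
        intro h0
        apply hne (Fin.last m)
        rw [lin_decomp _ (hhom (Fin.last m))]
        apply Finset.sum_eq_zero
        intro i _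
        rw [show coeff (Finsupp.single i 1) (ℓ (Fin.last m)) = 0 from congrFun h0 i]
        simp
      have hnp' : ∀ (k : Fin m) (c : ℂ),
          (fun i => coeff (Finsupp.single i 1) (ℓ (Fin.castSucc k))) ≠
            c • (fun i => coeff (Finsupp.single i 1) (ℓ (Fin.last m))) := by
        intro k c hc
        apply hprop (Fin.castSucc k) (Fin.last m) (Fin.ne_of_lt (Fin.castSucc_lt_last k)) c
        apply smul_of_coeff (hhom _) (hhom _)
        intro i
        exact congrFun hc i
      obtain ⟨v, hv0, hvk⟩ := exists_v m
        (fun k i => coeff (Finsupp.single i 1) (ℓ (Fin.castSucc k)))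
        (fun i => coeff (Finsupp.single i 1) (ℓ (Fin.last m))) hb hnp' 
      have hDL : Dv v (ℓ (Fin.last m)) = 0 := by
        rw [Dv_lin v (hhom _), show lam (ℓ (Fin.last m)) v = 0 from hv0, map_zero]
      have hck : ∀ k : Fin m, lam (ℓ (Fin.castSucc k)) v ≠ 0 := hvk
      have h2 : ∑ i : Fin (m+1),
          (Dv v)^[r (Fin.last m)] (ℓ i ^ (d + 1 - r i) * g i) = 0 := by
        rw [← iter_sum, hsum, iter_zero]
      rw [Fin.sum_univ_castSucc] at h2
      have hlast : (Dv v)^[r (Fin.last m)]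
          (ℓ (Fin.last m) ^ (d + 1 - r (Fin.last m)) * g (Fin.last m)) = 0 := by
        rw [iter_pow_ker v hDL]
        have hk := Dv_kill v (hg (Fin.last m))
        rw [show (r (Fin.last m) - 1) + 1 = r (Fin.last m) by have := hr (Fin.last m); omega]
          at hk
        rw [hk, mul_zero]
      rw [hlast, add_zero] at h2
      have hkex : ∀ k : Fin m, ∃ G : MvPolynomial (Fin n) ℂ,
          (Dv v)^[r (Fin.last m)]
            (ℓ (Fin.castSucc k) ^ (d + 1 - r (Fin.castSucc k)) * g (Fin.castSucc k))
            = ℓ (Fin.castSucc k) ^ ((d + 1 - r (Fin.castSucc k)) - r (Fin.last m)) * G ∧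
          G.IsHomogeneous (r (Fin.castSucc k) - 1) ∧ (G = 0 → g (Fin.castSucc k) = 0) := by
        intro k
        apply iter_pow_reg v (hck k) (hhom _) (Dv_lin v (hhom _)) _ _ _ _ _ (hg _)
        have := hpair k
        have := hr (Fin.castSucc k)
        omega
      choose G hG1 hG2 hG3 using hkex
      have hsum' : ∑ k : Fin m,
          (ℓ (Fin.castSucc k)) ^ ((d - r (Fin.last m)) + 1 - r (Fin.castSucc k)) * G k = 0 := by
        rw [← h2]
        apply Finset.sum_congr rfl
        intro k _
        rw [hG1 k]
        congr 2
        have := hpair k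
        have := hr (Fin.castSucc k)
        have := hr (Fin.last m)
        omega
      have hd' : ∑ k : Fin m, r (Fin.castSucc k) ≤ (d - r (Fin.last m)) + 1 := by
        have hd2 := hd
        rw [Fin.sum_univ_castSucc] at hd2
        rcases Nat.eq_zero_or_pos m with rfl | hm
        · simp
        · have := hpair ⟨0, hm⟩
          have := hr (Fin.castSucc ⟨0, hm⟩)
          omega
      have hzero := IH n (d - r (Fin.last m)) (fun k => ℓ (Fin.castSucc k))
        (fun k => r (Fin.castSucc k)) G (fun k => hhom _) (fun k => hne _)
        (fun i j hij c => hprop _ _ (fun h => hij (Fin.castSucc_inj.mp h)) c)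
        (fun k => hr _) hG2 hsum' hd'
      exact fun k => hG3 k (hzero k)
    intro i
    refine Fin.lastCases ?_ key i
    rw [Fin.sum_univ_castSucc] at hsum
    have hz : ∑ k : Fin m,
        ℓ (Fin.castSucc k) ^ (d + 1 - r (Fin.castSucc k)) * g (Fin.castSucc k) = 0 :=
      Finset.sum_eq_zero fun k _ => by rw [key k, mul_zero]
    rw [hz, zero_add] at hsum
    rcases mul_eq_zero.mp hsum with h | h
    · exact absurd h (pow_ne_zero _ (hne _))
    · exact h

end JordanAux


/-- Jordan's lemma: if `ℓ₁, …, ℓ_m` are pairwise non-proportional nonzero homogeneous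
linear forms, `g_k` is homogeneous of degree `r_k - 1`, `∑ ℓ_k^(d - r_k + 1) g_k = 0`
and `d ≥ (∑ r_k) - 1`, then all `g_k = 0`. -/
theorem statement3 {n d m : ℕ} (ℓ : Fin m → MvPolynomial (Fin n) ℂ)
    (r : Fin m → ℕ) (g : Fin m → MvPolynomial (Fin n) ℂ)
    (hhom : ∀ i, (ℓ i).IsHomogeneous 1) (hne : ∀ i, ℓ i ≠ 0)
    (hprop : ∀ i j, i ≠ j → ∀ c : ℂ, ℓ i ≠ c • ℓ j)
    (hr : ∀ i, 1 ≤ r i)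
    (hg : ∀ i, (g i).IsHomogeneous (r i - 1))
    (hsum : ∑ i, ℓ i ^ (d + 1 - r i) * g i = 0)
    (hd : ∑ i, r i ≤ d + 1) :
    ∀ i, g i = 0 :=
  JordanAux.main_aux m n d ℓ r g hhom hne hprop hr hg hsum hd
end
end

section
/- Let f ∈ ℂ[x_1,…,x_n] be a nonzero homogeneous polynomial of degree d ≥ 1 and suppose f = α(∏_{i=1}^m (1 + ℓ_i) − 1) for some α ∈ ℂ and nonzero homogeneous linear forms ℓ_1, …, ℓ_m ∈ ℂ[x_1,…,x_n]. Then m = d, all the ℓ_i are pairwise proportional, and f is a scalar multiple of ℓ_1^d (in particular, f is a d-th power of a homogeneous linear form up to a scalar). -/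
open MvPolynomial

noncomputable section

lemma eval_smul_of_isHomogeneous {σ : Type*} {k : ℕ} {φ : MvPolynomial σ ℂ}
    (h : φ.IsHomogeneous k) (t : ℂ) (x : σ → ℂ) :
    eval (fun i => t * x i) φ = t ^ k * eval x φ := by
  rw [eval_eq, eval_eq, Finset.mul_sum]
  refine Finset.sum_congr rfl fun d hd => ?_
  have hk : ∑ i ∈ d.support, d i = k := by
    have h2 := h (MvPolynomial.mem_support_iff.mp hd)
    change Finsupp.weight (fun _ => 1) d = k at h2
    rw [← Finsupp.degree_eq_weight_one] at h2
    exact h2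
  have : ∏ i ∈ d.support, (t * x i) ^ d i = t ^ k * ∏ i ∈ d.support, x i ^ d i := by
    rw [← hk]
    simp [mul_pow, Finset.prod_mul_distrib, Finset.prod_pow_eq_pow_sum]
  rw [this]; ring

/-- If a nonzero homogeneous `f` of degree `d ≥ 1` has an exact Kumar representation
`f = α(∏ (1 + ℓᵢ) - 1)` with nonzero homogeneous linear forms `ℓᵢ`, then `m = d`,
all the `ℓᵢ` are pairwise proportional, and `f` is a scalar multiple of `ℓᵢ^d`. -/
theorem statement6 {n d m : ℕ} (f : MvPolynomial (Fin n) ℂ) (hf0 : f ≠ 0)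
    (hf : f.IsHomogeneous d) (hd : 1 ≤ d)
    (α : ℂ) (ℓ : Fin m → MvPolynomial (Fin n) ℂ)
    (hhom : ∀ i, (ℓ i).IsHomogeneous 1) (hne : ∀ i, ℓ i ≠ 0)
    (heq : f = C α * ((∏ i, (1 + ℓ i)) - 1)) :
    m = d ∧ (∀ i j, ∃ c : ℂ, ℓ i = c • ℓ j) ∧ (∀ i, ∃ c : ℂ, f = c • ℓ i ^ d) := by
  have hα : α ≠ 0 := by
    rintro rfl
    simp at heq
    exact hf0 heq
  -- key scalar identity
  have star : ∀ (x : Fin n → ℂ) (t : ℂ),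
      α + eval x f * t ^ d = α * ∏ i, (1 + t * eval x (ℓ i)) := by
    intro x t
    have h1 := congrArg (eval (fun i => t * x i)) heq
    rw [eval_smul_of_isHomogeneous hf t x] at h1
    simp only [map_mul, map_sub, map_prod, map_add, map_one, eval_C] at h1
    have h2 : ∀ i, eval (fun i => t * x i) (ℓ i) = t * eval x (ℓ i) := by
      intro i
      have := eval_smul_of_isHomogeneous (hhom i) t x
      simpa using this
    simp only [h2] at h1
    linear_combination h1
  -- the per-index power identity
  have key : ∀ i, C α * ℓ i ^ d = C ((-1 : ℂ) ^ (d + 1)) * f := by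
    intro i
    have hz : (C α * ℓ i ^ d - C ((-1 : ℂ) ^ (d + 1)) * f) * ℓ i = 0 := by
      apply MvPolynomial.funext
      intro x
      simp only [map_mul, map_sub, map_pow, eval_C, map_zero]
      by_cases hx : eval x (ℓ i) = 0
      · simp [hx]
      · have hs := star x (-(eval x (ℓ i))⁻¹)
        have hprod0 : (∏ j, (1 + -(eval x (ℓ i))⁻¹ * eval x (ℓ j))) = 0 := by
          apply Finset.prod_eq_zero (Finset.mem_univ i)
          field_simp
          ring
        rw [hprod0, mul_zero] at hs
        have hmain : α * eval x (ℓ i) ^ d - (-1 : ℂ) ^ (d + 1) * eval x f = 0 := by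
          have hpd : (-(eval x (ℓ i))⁻¹) ^ d = (-1 : ℂ) ^ d * ((eval x (ℓ i)) ^ d)⁻¹ := by
            rw [neg_pow, inv_pow]
          rw [hpd] at hs
          have hxd : (eval x (ℓ i)) ^ d ≠ 0 := pow_ne_zero _ hx
          field_simp at hs
          rw [pow_succ]
          linear_combination hs
        rw [hmain, zero_mul]
    rcases mul_eq_zero.mp hz with h | h
    · exact sub_eq_zero.mp h
    · exact absurd h (hne i)
  have hsq : ((-1 : ℂ) ^ (d + 1)) * ((-1 : ℂ) ^ (d + 1)) = 1 := by
    rw [← pow_add]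
    exact Even.neg_one_pow ⟨d + 1, rfl⟩
  -- conclusion 3
  have conc3 : ∀ i, f = ((-1 : ℂ) ^ (d + 1) * α) • ℓ i ^ d := by
    intro i
    have := congrArg (fun p => C ((-1 : ℂ) ^ (d + 1)) * p) (key i)
    rw [← mul_assoc, ← C_mul, ← mul_assoc, ← C_mul, hsq, C_1, one_mul] at this
    rw [MvPolynomial.smul_eq_C_mul, ← this, C_mul]
  refine ⟨?_, ?_, fun i => ⟨_, conc3 i⟩⟩
  · -- m = d via a univariate degree count
    have hCα : (C α : MvPolynomial (Fin n) ℂ) ≠ 0 := by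
      simpa using hα
    have hprodne : f * ∏ i, ℓ i ≠ 0 :=
      mul_ne_zero hf0 (Finset.prod_ne_zero_iff.mpr fun i _ => hne i)
    have hexists : ∃ x, eval x (f * ∏ i, ℓ i) ≠ 0 := by
      by_contra h
      push_neg at h
      exact hprodne (MvPolynomial.funext fun x => by simpa using h x)
    obtain ⟨x, hx⟩ := hexists
    simp only [map_mul, map_prod, ne_eq, mul_eq_zero, not_or, Finset.prod_eq_zero_iff] at hx
    have hfx : eval x f ≠ 0 := hx.1
    have hax : ∀ i, eval x (ℓ i) ≠ 0 := fun i hi => hx.2 ⟨i, Finset.mem_univ i, hi⟩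
    set P : Polynomial ℂ := Polynomial.C α * ∏ i, (1 + Polynomial.C (eval x (ℓ i)) * Polynomial.X)
      with hP
    set Q : Polynomial ℂ := Polynomial.C α + Polynomial.C (eval x f) * Polynomial.X ^ d with hQ
    have hPQ : P = Q := by
      apply Polynomial.funext
      intro t
      simp only [hP, hQ, Polynomial.eval_mul, Polynomial.eval_add, Polynomial.eval_one,
        Polynomial.eval_C, Polynomial.eval_prod, Polynomial.eval_pow, Polynomial.eval_X]
      have hcomm : (∏ i, (1 + eval x (ℓ i) * t)) = ∏ i, (1 + t * eval x (ℓ i)) :=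
        Finset.prod_congr rfl fun i _ => by ring
      rw [hcomm]
      exact (star x t).symm
    have hdegP : P.natDegree = m := by
      rw [hP, Polynomial.natDegree_C_mul hα, Polynomial.natDegree_prod]
      · have : ∀ i : Fin m, (1 + Polynomial.C (eval x (ℓ i)) * Polynomial.X).natDegree = 1 := by
          intro i
          rw [add_comm]
          have := Polynomial.natDegree_linear (hax i) (b := (1 : ℂ))
          simpa using this
        simp [this]
      · intro i _
        intro hzero
        have := congrArg (Polynomial.coeff · 1) hzero
        simp [Polynomial.coeff_one, hax i] at this
    have hdegQ : Q.natDegree = d := by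
      rw [hQ, add_comm, Polynomial.natDegree_add_C,
        Polynomial.natDegree_C_mul hfx, Polynomial.natDegree_X_pow]
    rw [← hdegP, ← hdegQ, hPQ]
  · -- pairwise proportionality
    intro i j
    have hij : ℓ i ^ d = ℓ j ^ d := by
      have h1 := (key i).trans (key j).symm
      exact mul_left_cancel₀ (by simpa using hα) h1
    have hzero : (∏ ζ ∈ Polynomial.nthRootsFinset d (1 : ℂ), (ℓ i - C ζ * ℓ j)) = 0 := by
      apply MvPolynomial.funext
      intro x
      simp only [map_prod, map_sub, map_mul, eval_C, map_zero]
      have hev : eval x (ℓ i) ^ d = eval x (ℓ j) ^ d := by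
        have := congrArg (eval x) hij
        simpa using this
      by_cases hb : eval x (ℓ j) = 0
      · have ha : eval x (ℓ i) = 0 := by
          have : eval x (ℓ i) ^ d = 0 := by rw [hev, hb, zero_pow (by omega)]
          exact pow_eq_zero_iff (by omega) |>.mp this
        refine Finset.prod_eq_zero (Polynomial.one_mem_nthRootsFinset (by omega)) ?_
        rw [ha, hb, mul_zero, sub_zero]
      · have hζ : (eval x (ℓ i) / eval x (ℓ j)) ^ d = 1 := by
          rw [div_pow, hev, div_self (pow_ne_zero _ hb)]
        refine Finset.prod_eq_zero
          ((Polynomial.mem_nthRootsFinset (by omega : 0 < d) 1).mpr hζ) ?_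
        field_simp
        ring
    obtain ⟨ζ, _, hζ⟩ := Finset.prod_eq_zero_iff.mp hzero
    exact ⟨ζ, by rw [MvPolynomial.smul_eq_C_mul]; exact sub_eq_zero.mp hζ⟩
end
end

section
/- Let f = ℓ_1 ⋯ ℓ_d be a product of d ≥ 1 nonzero homogeneous linear forms over ℂ. Then the border Kumar complexity of f equals d: there exist α ∈ ℂ((ε)) and homogeneous linear forms L_1, …, L_d with coefficients in ℂ((ε)) such that α(∏_{i=1}^d (1 + L_i) − 1) has all coefficients in ℂ[[ε]] and is ≡ f (mod ε) (for instance α = ε^d and L_i = ε^{−1}ℓ_i), and no such representation with fewer than d factors exists. -/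
open MvPolynomial

noncomputable section

/-- The border Kumar complexity of `f`: the least `m` for which there are
`α ∈ ℂ((ε))` and homogeneous linear forms `ℓ₁, …, ℓ_m` over `ℂ((ε))` such that
`α(∏ (1 + ℓᵢ) - 1)` has coefficients in `ℂ[[ε]]` and is `≡ f (mod ε)`. -/
def borderKumar {n : ℕ} (f : MvPolynomial (Fin n) ℂ) : ℕ :=
  sInf {m | ∃ (α : LaurentSeries ℂ) (ℓ : Fin m → MvPolynomial (Fin n) (LaurentSeries ℂ)),
    (∀ i, (ℓ i).IsHomogeneous 1) ∧ ApproxTo (C α * ((∏ i, (1 + ℓ i)) - 1)) f}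

/-- If `f` is a product of `d ≥ 1` nonzero homogeneous linear forms, then its
border Kumar complexity equals `d`. -/
theorem statement8 {n d : ℕ} (hd : 1 ≤ d) (ℓ : Fin d → MvPolynomial (Fin n) ℂ)
    (hhom : ∀ i, (ℓ i).IsHomogeneous 1) (hne : ∀ i, ℓ i ≠ 0) :
    borderKumar (∏ i, ℓ i) = d := by
  classical
  have hfhom : (∏ i, ℓ i).IsHomogeneous d := by
    simpa using MvPolynomial.IsHomogeneous.prod Finset.univ ℓ (fun _ => 1)
      (fun i _ => hhom i)
  have hfne : (∏ i, ℓ i) ≠ 0 :=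
    Finset.prod_ne_zero_iff.mpr (fun i _ => hne i)
  unfold borderKumar
  apply IsLeast.csInf_eq
  constructor
  · -- membership: the construction with α = ε^d and L_i = ε⁻¹ ℓ_i
    set φ : ℂ →+* LaurentSeries ℂ := HahnSeries.C with hφ
    set u : LaurentSeries ℂ := HahnSeries.single (-1 : ℤ) 1 with hu
    set α : LaurentSeries ℂ := HahnSeries.single (d : ℤ) 1 with hα
    have hexp : (∏ i : Fin d, (1 + (MvPolynomial.C u * MvPolynomial.map φ (ℓ i)))) =
        ∑ t ∈ (Finset.univ : Finset (Fin d)).powerset,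
          MvPolynomial.C (u ^ t.card) * MvPolynomial.map φ (∏ i ∈ t, ℓ i) := by
      rw [show (∏ i : Fin d, (1 + MvPolynomial.C u * MvPolynomial.map φ (ℓ i))) =
          ∏ i : Fin d, (MvPolynomial.C u * MvPolynomial.map φ (ℓ i) + 1) from
        Finset.prod_congr rfl fun i _ => add_comm _ _]
      rw [Finset.prod_add]
      refine Finset.sum_congr rfl fun t _ => ?_
      rw [Finset.prod_const_one, mul_one, Finset.prod_mul_distrib, Finset.prod_const,
        map_prod, map_pow]
    have hco : ∀ (μ : Fin n →₀ ℕ),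
        (MvPolynomial.C α *
          ((∏ i, (1 + MvPolynomial.C u * MvPolynomial.map φ (ℓ i))) - 1)).coeff μ =
        (∑ t ∈ (Finset.univ : Finset (Fin d)).powerset,
          HahnSeries.single ((d : ℤ) - t.card) ((∏ i ∈ t, ℓ i).coeff μ))
        - (MvPolynomial.C α).coeff μ := by
      intro μ
      rw [mul_sub (MvPolynomial.C α : MvPolynomial (Fin n) (LaurentSeries ℂ))
          (∏ i, (1 + MvPolynomial.C u * MvPolynomial.map φ (ℓ i))) 1, mul_one, MvPolynomial.coeff_sub, hexp, Finset.mul_sum,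
        MvPolynomial.coeff_sum]
      congr 1
      refine Finset.sum_congr rfl fun t _ => ?_
      rw [MvPolynomial.coeff_C_mul, MvPolynomial.coeff_C_mul, MvPolynomial.coeff_map,
        ← mul_assoc]
      rw [hα, hu, HahnSeries.single_pow, HahnSeries.single_mul_single]
      rw [show φ ((∏ i ∈ t, ℓ i).coeff μ) =
          HahnSeries.single (0:ℤ) ((∏ i ∈ t, ℓ i).coeff μ) from rfl]
      rw [HahnSeries.single_mul_single]
      congr 1
      · push_cast [nsmul_eq_mul]; ring
      · simp
    have hcard : ∀ t ∈ (Finset.univ : Finset (Fin d)).powerset, t.card ≤ d := by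
      intro t ht
      have := Finset.card_le_card (Finset.mem_powerset.mp ht)
      simpa using this
    refine ⟨α, fun i => MvPolynomial.C u * MvPolynomial.map φ (ℓ i),
      fun i => ((hhom i).map φ).C_mul u, ?_, ?_⟩
    · -- regularity
      intro μ k hk
      have hsum : (∑ t ∈ (Finset.univ : Finset (Fin d)).powerset,
          HahnSeries.single ((d : ℤ) - t.card) ((∏ i ∈ t, ℓ i).coeff μ)).coeff k =
          ∑ t ∈ (Finset.univ : Finset (Fin d)).powerset,
            (HahnSeries.single ((d : ℤ) - t.card) ((∏ i ∈ t, ℓ i).coeff μ)).coeff k :=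
        map_sum (HahnSeries.coeff.addMonoidHom k) _ _
      rw [hco μ, HahnSeries.coeff_sub, hsum]
      have h1 : ∀ t ∈ (Finset.univ : Finset (Fin d)).powerset,
          (HahnSeries.single ((d : ℤ) - t.card) ((∏ i ∈ t, ℓ i).coeff μ)).coeff k = 0 := by
        intro t ht
        rw [HahnSeries.coeff_single, if_neg]
        have := hcard t ht
        omega
      rw [Finset.sum_eq_zero h1, MvPolynomial.coeff_C]
      split
      · rw [hα, HahnSeries.coeff_single, if_neg (by omega)]; ring
      · simp
    · -- coefficient at ε^0
      intro μ
      have hsum : (∑ t ∈ (Finset.univ : Finset (Fin d)).powerset,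
          HahnSeries.single ((d : ℤ) - t.card) ((∏ i ∈ t, ℓ i).coeff μ)).coeff (0 : ℤ) =
          ∑ t ∈ (Finset.univ : Finset (Fin d)).powerset,
            (HahnSeries.single ((d : ℤ) - t.card) ((∏ i ∈ t, ℓ i).coeff μ)).coeff (0 : ℤ) :=
        map_sum (HahnSeries.coeff.addMonoidHom (0 : ℤ)) _ _
      rw [hco μ, HahnSeries.coeff_sub, hsum]
      have h1 : ∑ t ∈ (Finset.univ : Finset (Fin d)).powerset,
            (HahnSeries.single ((d : ℤ) - t.card) ((∏ i ∈ t, ℓ i).coeff μ)).coeff (0 : ℤ) =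
          (∏ i, ℓ i).coeff μ := by
        rw [Finset.sum_eq_single_of_mem (Finset.univ : Finset (Fin d))
          (Finset.mem_powerset_self _)]
        · rw [show ((d : ℤ) - ((Finset.univ : Finset (Fin d)).card : ℤ) = 0) by simp,
            HahnSeries.coeff_single_same]
        · intro t ht htne
          rw [HahnSeries.coeff_single, if_neg]
          have h2 : t.card < d := by
            have h3 := Finset.card_lt_card (Finset.ssubset_univ_iff.mpr htne)
            simpa using h3
          omega
      rw [h1, MvPolynomial.coeff_C]
      split
      · rw [hα, HahnSeries.coeff_single, if_neg (by omega)]; ring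
      · simp
  · -- lower bound
    rintro m ⟨α, L, hL, hreg, h0⟩
    by_contra hlt
    push_neg at hlt
    obtain ⟨μ, hμ⟩ := MvPolynomial.ne_zero_iff.mp hfne
    have hdeg : μ.degree = d := by
      by_contra h
      exact hμ (hfhom.coeff_eq_zero h)
    have hμ0 : μ ≠ 0 := by
      intro h; rw [h, map_zero] at hdeg; omega
    have htd : (∏ i, (1 + L i)).totalDegree < ∑ i ∈ μ.support, μ i := by
      have h1 : (∏ i, (1 + L i)).totalDegree ≤ m := by
        refine le_trans (MvPolynomial.totalDegree_finset_prod _ _) ?_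
        calc ∑ i : Fin m, (1 + L i).totalDegree
            ≤ ∑ _i : Fin m, 1 := Finset.sum_le_sum (fun i _ =>
              le_trans (MvPolynomial.totalDegree_add 1 (L i))
                (max_le (by simp [MvPolynomial.totalDegree_one]) (hL i).totalDegree_le))
          _ = m := by simp
      have : (∑ i ∈ μ.support, μ i) = d := hdeg
      omega
    have hc : ((∏ i, (1 + L i)) - 1).coeff μ = 0 := by
      rw [MvPolynomial.coeff_sub, MvPolynomial.coeff_eq_zero_of_totalDegree_lt htd,
        MvPolynomial.coeff_one, if_neg (by simpa using hμ0.symm)]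
      ring
    have := h0 μ
    rw [MvPolynomial.coeff_C_mul, hc, mul_zero] at this
    simp only [HahnSeries.coeff_zero] at this
    exact hμ this.symm
end
end

section
/- Let f ∈ ℂ[x_1,…,x_n] be homogeneous of degree d and suppose there exist γ ∈ ℂ, an integer N ≥ 1, and homogeneous linear forms ℓ_1, …, ℓ_m in x_1,…,x_n with coefficients in ℂ((ε)) such that γ ε^N (∏_{i=1}^m (1 + ℓ_i) − 1) has all coefficients in ℂ[[ε]] and is ≡ f (mod ε). Then d ≤ m and f is a product of homogeneous linear forms over ℂ. -/
open MvPolynomial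

noncomputable section

abbrev LS := LaurentSeries ℂ

def Reg (x : LS) : Prop := ∀ k : ℤ, k < 0 → x.coeff k = 0

lemma reg_mul {a b : LS} (ha : Reg a) (hb : Reg b) : Reg (a * b) := by
  intro k hk
  rw [HahnSeries.coeff_mul]
  refine Finset.sum_eq_zero fun ij hij => ?_
  rcases lt_or_ge ij.1 0 with h | h
  · rw [ha _ h, zero_mul]
  · have := (Finset.mem_addAntidiagonal.mp hij).2.2
    have : ij.2 < 0 := by omega
    rw [hb _ this, mul_zero]

lemma reg_mul_coeff_zero {a b : LS} (ha : Reg a) (hb : Reg b) :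
    (a * b).coeff 0 = a.coeff 0 * b.coeff 0 := by
  rw [HahnSeries.coeff_mul]
  refine Finset.sum_eq_single (0, 0) (fun ij hij hne => ?_) (fun h => ?_)
  · rcases lt_or_ge ij.1 0 with h | h
    · rw [ha _ h, zero_mul]
    · have h2 := (Finset.mem_addAntidiagonal.mp hij).2.2
      rcases lt_or_ge ij.2 0 with h' | h'
      · rw [hb _ h', mul_zero]
      · exfalso; apply hne
        have : ij.1 = 0 := by omega
        have : ij.2 = 0 := by omega
        ext <;> omega
  · simp only [Finset.mem_addAntidiagonal, Set.mem_setOf_eq, add_zero, and_true,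
      HahnSeries.mem_support] at h
    rcases not_and_or.mp h with h | h
    · rw [not_ne_iff.mp h, zero_mul]
    · rw [not_ne_iff.mp h, mul_zero]



variable {σ : Type*}

/-- coefficientwise residue at ε = 0 -/
def pres (P : MvPolynomial σ LS) : MvPolynomial σ ℂ :=
  ∑ μ ∈ P.support, monomial μ ((P.coeff μ).coeff 0)

lemma pres_coeff (P : MvPolynomial σ LS) (μ : σ →₀ ℕ) :
    (pres P).coeff μ = (P.coeff μ).coeff 0 := by
  classical
  rw [pres, coeff_sum]
  rcases em (μ ∈ P.support) with h | h
  · rw [Finset.sum_eq_single μ]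
    · simp
    · intro ν _ hne; rw [coeff_monomial, if_neg hne]
    · exact fun hμ => absurd h hμ
  · rw [Finset.sum_eq_zero]
    · rw [MvPolynomial.notMem_support_iff.mp h, HahnSeries.coeff_zero]
    · intro ν hν; rw [coeff_monomial, if_neg]
      rintro rfl; exact h hν

lemma hrc_iff {P : MvPolynomial σ LS} : HasRegularCoeffs P ↔ ∀ μ, Reg (P.coeff μ) := Iff.rfl

lemma hrc_mul {P Q : MvPolynomial σ LS} (hP : HasRegularCoeffs P) (hQ : HasRegularCoeffs Q) :
    HasRegularCoeffs (P * Q) := by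
  classical
  intro μ k hk
  rw [coeff_mul]
  rw [show (∑ x ∈ Finset.HasAntidiagonal.antidiagonal μ, coeff x.1 P * coeff x.2 Q).coeff k
      = ∑ x ∈ Finset.HasAntidiagonal.antidiagonal μ, (coeff x.1 P * coeff x.2 Q).coeff k from
    map_sum (HahnSeries.coeff.addMonoidHom k) _ _]
  exact Finset.sum_eq_zero fun x _ => reg_mul (hP x.1) (hQ x.2) k hk

lemma pres_mul {P Q : MvPolynomial σ LS} (hP : HasRegularCoeffs P) (hQ : HasRegularCoeffs Q) :
    pres (P * Q) = pres P * pres Q := by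
  classical
  ext μ
  rw [pres_coeff, coeff_mul, coeff_mul]
  rw [show (∑ x ∈ Finset.HasAntidiagonal.antidiagonal μ, coeff x.1 P * coeff x.2 Q).coeff 0
      = ∑ x ∈ Finset.HasAntidiagonal.antidiagonal μ, (coeff x.1 P * coeff x.2 Q).coeff 0 from
    map_sum (HahnSeries.coeff.addMonoidHom 0) _ _]
  exact Finset.sum_congr rfl fun x _ => by
    rw [reg_mul_coeff_zero (hP x.1) (hQ x.2), pres_coeff, pres_coeff]

lemma hrc_one : HasRegularCoeffs (1 : MvPolynomial σ LS) := by
  classical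
  intro μ k hk
  rcases em (μ = 0) with rfl | h
  · rw [coeff_one, if_pos rfl, HahnSeries.coeff_one, if_neg (by omega)]
  · rw [coeff_one, if_neg (Ne.symm h), HahnSeries.coeff_zero]

lemma pres_one : pres (1 : MvPolynomial σ LS) = 1 := by
  classical
  ext μ
  rw [pres_coeff, coeff_one, coeff_one]
  rcases em ((0:σ→₀ℕ) = μ) with h | h
  · rw [if_pos h, if_pos h, HahnSeries.coeff_one, if_pos rfl]
  · rw [if_neg h, if_neg h, HahnSeries.coeff_zero]

lemma hrc_prod {ι : Type*} (s : Finset ι) (u : ι → MvPolynomial σ LS)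
    (h : ∀ i ∈ s, HasRegularCoeffs (u i)) :
    HasRegularCoeffs (∏ i ∈ s, u i) ∧ pres (∏ i ∈ s, u i) = ∏ i ∈ s, pres (u i) := by
  classical
  induction s using Finset.induction with
  | empty => simpa using ⟨hrc_one, pres_one⟩
  | @insert a s' hx ih =>
    rw [Finset.prod_insert hx, Finset.prod_insert hx]
    have ha := h a (Finset.mem_insert_self a s')
    have ih' := ih fun i hi => h i (Finset.mem_insert_of_mem hi)
    exact ⟨hrc_mul ha ih'.1, by rw [pres_mul ha ih'.1, ih'.2]⟩



lemma coeff_single_C_mul (v : ℤ) (P : MvPolynomial σ LS) (μ : σ →₀ ℕ) (k : ℤ) :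
    ((C (HahnSeries.single v (1:ℂ)) * P).coeff μ).coeff k = (P.coeff μ).coeff (k - v) := by
  rw [coeff_C_mul]
  have := HahnSeries.coeff_single_mul_add (r := (1:ℂ)) (x := P.coeff μ) (a := k - v) (b := v)
  rw [one_mul] at this
  rw [show k = k - v + v by ring, this]; congr 1; ring

lemma polyNormalize (P : MvPolynomial σ LS) (hP : P ≠ 0) :
    ∃ (v : ℤ) (u : MvPolynomial σ LS), P = C (HahnSeries.single v 1) * u ∧
      HasRegularCoeffs u ∧ pres u ≠ 0 ∧ ∀ μ, P.coeff μ = 0 → u.coeff μ = 0 := by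
  have hsupp : P.support.Nonempty := MvPolynomial.support_nonempty.mpr hP
  set v : ℤ := P.support.inf' hsupp (fun μ => (P.coeff μ).order) with hv
  refine ⟨v, C (HahnSeries.single (-v) 1) * P, ?_, ?_, ?_, ?_⟩
  · rw [← mul_assoc, ← C_mul, HahnSeries.single_mul_single, one_mul, add_neg_cancel,
      HahnSeries.single_zero_one, C_1, one_mul]
  · intro μ k hk
    rw [coeff_single_C_mul]
    rcases em (P.coeff μ = 0) with h | h
    · rw [h, HahnSeries.coeff_zero]
    · refine HahnSeries.coeff_eq_zero_of_lt_order ?_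
      have : v ≤ (P.coeff μ).order := Finset.inf'_le _ (by simpa using h)
      omega
  · obtain ⟨μ₀, hμ₀, hord⟩ := Finset.exists_mem_eq_inf' hsupp (fun μ => (P.coeff μ).order)
    have hne : P.coeff μ₀ ≠ 0 := by simpa using hμ₀
    intro hzero
    have : (pres (C (HahnSeries.single (-v) 1) * P)).coeff μ₀ = 0 := by rw [hzero, coeff_zero]
    rw [pres_coeff, coeff_single_C_mul, zero_sub, neg_neg, hv] at this
    rw [hord] at this
    exact hne (HahnSeries.coeff_order_eq_zero.mp this)
  · intro μ h
    rw [coeff_C_mul, h, mul_zero]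

lemma single_prod {ι : Type*} (s : Finset ι) (v : ι → ℤ) :
    ∏ i ∈ s, (HahnSeries.single (v i) (1:ℂ) : LS) = HahnSeries.single (∑ i ∈ s, v i) 1 := by
  classical
  induction s using Finset.induction with
  | empty => simp [HahnSeries.single_zero_one]
  | @insert a s' hx ih =>
    rw [Finset.prod_insert hx, Finset.sum_insert hx, ih, HahnSeries.single_mul_single, one_mul]


lemma degree_add' (a b : σ →₀ ℕ) : (a + b).degree = a.degree + b.degree := by
  simp [Finsupp.degree_eq_weight_one, map_add]

lemma totalDegree_eq_sup (p : MvPolynomial σ ℂ) :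
    p.totalDegree = p.support.sup Finsupp.degree := by
  simp only [MvPolynomial.totalDegree, Finsupp.sum]
  rfl

lemma degree_le_totalDegree {p : MvPolynomial σ ℂ} {μ : σ →₀ ℕ} (h : μ ∈ p.support) :
    μ.degree ≤ p.totalDegree := by
  rw [totalDegree_eq_sup]; exact Finset.le_sup h

lemma hc_mul_linear {L : MvPolynomial σ ℂ} (hL : L.IsHomogeneous 1) (h : MvPolynomial σ ℂ)
    (k : ℕ) : homogeneousComponent (k + 1) (L * h) = L * homogeneousComponent k h := by
  classical
  ext μ
  rw [coeff_homogeneousComponent, coeff_mul, coeff_mul]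
  by_cases hdc : μ.degree = k + 1
  · rw [if_pos hdc]
    refine Finset.sum_congr rfl fun x hx => ?_
    rw [coeff_homogeneousComponent]
    by_cases hLa : L.coeff x.1 = 0
    · rw [hLa, zero_mul, zero_mul]
    · have h1 : (x.1).degree = 1 := by
        by_contra hne; exact hLa (hL.coeff_eq_zero hne)
      have hxm := Finset.HasAntidiagonal.mem_antidiagonal.mp hx
      rw [if_pos (by rw [← hxm, degree_add', h1] at hdc; omega)]
  · rw [if_neg hdc]
    symm
    refine Finset.sum_eq_zero fun x hx => ?_
    rw [coeff_homogeneousComponent]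
    by_cases hLa : L.coeff x.1 = 0
    · rw [hLa, zero_mul]
    · have h1 : (x.1).degree = 1 := by
        by_contra hne; exact hLa (hL.coeff_eq_zero hne)
      have hxm := Finset.HasAntidiagonal.mem_antidiagonal.mp hx
      rw [if_neg (fun hd2 => hdc (by rw [← hxm, degree_add', h1, hd2]; omega)), mul_zero]

lemma hc_top_ne_zero {p : MvPolynomial σ ℂ} (hp : p ≠ 0) :
    homogeneousComponent p.totalDegree p ≠ 0 := by
  have hsupp : p.support.Nonempty := MvPolynomial.support_nonempty.mpr hp
  obtain ⟨μ, hμ, hdeg⟩ := Finset.exists_mem_eq_sup p.support hsupp Finsupp.degree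
  intro h0
  have : (homogeneousComponent p.totalDegree p).coeff μ = 0 := by rw [h0, coeff_zero]
  rw [coeff_homogeneousComponent, if_pos (by rw [totalDegree_eq_sup, ← hdeg])] at this
  exact (MvPolynomial.mem_support_iff.mp hμ) this

lemma factorE {σ : Type*} : ∀ (m : ℕ) (g : Fin m → MvPolynomial σ ℂ),
    (∀ i, ∃ (c : ℂ) (L : MvPolynomial σ ℂ), L.IsHomogeneous 1 ∧ g i = C c + L) →
    ∀ (d : ℕ) (f : MvPolynomial σ ℂ), f ≠ 0 → f.IsHomogeneous d →
    ∀ γ : ℂ, f = C γ * ∏ i, g i →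
    d ≤ m ∧ ∃ (c : ℂ) (L : Fin d → MvPolynomial σ ℂ),
      (∀ i, (L i).IsHomogeneous 1) ∧ f = C c * ∏ i, L i := by
  intro m
  induction m with
  | zero =>
    intro g _ d f hf0 hf γ heq
    classical
    rw [Finset.univ_eq_empty, Finset.prod_empty, mul_one] at heq
    have hd : d = 0 := by
      by_contra hd
      refine hf0 ?_
      subst heq
      ext μ
      rcases em (μ = 0) with rfl | hμ
      · rw [hf.coeff_eq_zero (by simpa [map_zero] using Ne.symm hd), coeff_zero]
      · rw [coeff_C, if_neg (Ne.symm hμ), coeff_zero]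
    subst hd
    exact ⟨le_refl 0, γ, Fin.elim0, fun i => i.elim0, by simpa using heq⟩
  | succ m ih =>
    intro g hg d f hf0 hf γ heq
    obtain ⟨c, L, hL, hg0⟩ := hg 0
    set h' : MvPolynomial σ ℂ := C γ * ∏ i : Fin m, g i.succ with hh'
    have heq' : f = (C c + L) * h' := by
      rw [heq, Fin.prod_univ_succ, hg0, hh']; ring
    have h'ne : h' ≠ 0 := by
      intro h0; rw [h0, mul_zero] at heq'; exact hf0 heq'
    by_cases hL0 : L = 0
    · -- constant factor
      have heq2 : f = C (γ * c) * ∏ i : Fin m, g i.succ := by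
        rw [heq, Fin.prod_univ_succ, hg0, hL0, add_zero, C_mul]; ring
      obtain ⟨hdm, rest⟩ := ih (fun i => g i.succ) (fun i => hg i.succ) d f hf0 hf (γ * c) heq2
      exact ⟨hdm.trans (Nat.le_succ m), rest⟩
    · -- genuinely linear factor
      set t := h'.totalDegree with ht
      have hckey : ∀ k : ℕ, homogeneousComponent (k + 1) f
          = C c * homogeneousComponent (k + 1) h' + L * homogeneousComponent k h' := by
        intro k
        rw [heq', add_mul, map_add, homogeneousComponent_C_mul, hc_mul_linear hL]
      have hfc : ∀ k : ℕ, k ≠ d → homogeneousComponent k f = 0 := by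
        intro k hk
        rw [homogeneousComponent_of_mem hf, if_neg hk]
      have htop : homogeneousComponent t h' ≠ 0 := hc_top_ne_zero h'ne
      have htop1 : homogeneousComponent (t + 1) h' = 0 :=
        homogeneousComponent_eq_zero _ _ (Nat.lt_succ_self t)
      have hd : t + 1 = d := by
        by_contra hne
        have := hfc (t + 1) hne
        rw [hckey t, htop1, mul_zero, zero_add] at this
        exact (mul_ne_zero hL0 htop) this
      -- show c = 0
      have hc0 : c = 0 := by
        by_contra hc0
        have hsupp : h'.support.Nonempty := MvPolynomial.support_nonempty.mpr h'ne
        obtain ⟨μb, hμb, hbdeg⟩ := Finset.exists_mem_eq_inf' hsupp Finsupp.degree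
        set b := h'.support.inf' hsupp Finsupp.degree with hb
        have hbot : homogeneousComponent b h' ≠ 0 := by
          intro h0
          have : (homogeneousComponent b h').coeff μb = 0 := by rw [h0, coeff_zero]
          rw [coeff_homogeneousComponent, if_pos hbdeg.symm] at this
          exact (MvPolynomial.mem_support_iff.mp hμb) this
        have hlow : ∀ k, k < b → homogeneousComponent k h' = 0 := by
          intro k hk
          ext μ
          rw [coeff_homogeneousComponent, coeff_zero]
          by_cases hμ : μ.degree = k
          · rw [if_pos hμ]
            by_contra hne
            have : b ≤ μ.degree := Finset.inf'_le _ (MvPolynomial.mem_support_iff.mpr hne)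
            omega
          · rw [if_neg hμ]
        have hble : b ≤ t := by
          rw [hbdeg, ht]; exact degree_le_totalDegree hμb
        rcases Nat.eq_zero_or_pos b with hbz | hbpos
        · -- b = 0
          have hL00 : L.coeff 0 = 0 := hL.coeff_eq_zero (by simp [map_zero])
          have h00 : MvPolynomial.coeff 0 (L * h') = 0 := by
            have := map_mul (MvPolynomial.constantCoeff (σ := σ) (R := ℂ)) L h'
            rw [MvPolynomial.constantCoeff_eq] at this
            rw [show MvPolynomial.coeff 0 (L * h') = MvPolynomial.coeff 0 L * MvPolynomial.coeff 0 h' from this, hL00, zero_mul]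
          have h0f : homogeneousComponent 0 f = C c * homogeneousComponent 0 h' := by
            rw [heq', add_mul, map_add, homogeneousComponent_C_mul,
              homogeneousComponent_zero, homogeneousComponent_zero, h00, map_zero, add_zero]
          have : homogeneousComponent 0 f ≠ 0 := by
            rw [h0f]
            exact mul_ne_zero (fun hCc => hc0 (by
              simpa using congrArg (MvPolynomial.coeff 0) hCc)) (hbz ▸ hbot)
          exact this (hfc 0 (by omega))
        · obtain ⟨b', hb'⟩ : ∃ b', b = b' + 1 := ⟨b - 1, by omega⟩
          have : homogeneousComponent (b' + 1) f ≠ 0 := by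
            rw [hckey b', hlow b' (by omega), mul_zero, add_zero, ← hb']
            exact mul_ne_zero (fun hCc => hc0 (by
              simpa using congrArg (MvPolynomial.coeff 0) hCc)) hbot
          exact this (hfc (b' + 1) (by omega))
      -- f = L * h', and h' is homogeneous of degree t
      rw [hc0, map_zero, zero_add] at heq'
      have hH : h'.IsHomogeneous t := by
        intro μ hμ
        by_contra hne
        have hcomp : (homogeneousComponent μ.degree h').coeff μ ≠ 0 := by
          rw [coeff_homogeneousComponent, if_pos rfl]; exact hμ
        have : homogeneousComponent (μ.degree + 1) f = L * homogeneousComponent μ.degree h' := by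
          rw [hckey μ.degree, hc0, map_zero, zero_mul, zero_add]
        have h0 : homogeneousComponent (μ.degree + 1) f = 0 := by
          refine hfc _ fun hcon => ?_
          rw [← hd] at hcon
          apply hne
          simpa [Finsupp.degree_eq_weight_one, Pi.one_def] using Nat.succ_injective hcon
        rw [this] at h0
        rcases mul_eq_zero.mp h0 with h | h
        · exact hL0 h
        · exact hcomp (by rw [h, coeff_zero])
      obtain ⟨htm, c', L', hL', hfac⟩ := ih (fun i => g i.succ) (fun i => hg i.succ) t h' h'ne hH γ hh'
      subst hd
      refine ⟨by omega, c', Fin.cons L L', ?_, ?_⟩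
      · intro i
        refine Fin.cases ?_ ?_ i
        · simpa using hL
        · intro j; simpa using hL' j
      · rw [Fin.prod_univ_succ, Fin.cons_zero]
        simp only [Fin.cons_succ]
        rw [heq', hfac]; ring

lemma coeff_single_C_mul' {σ : Type*} (v : ℤ) (c : ℂ) (P : MvPolynomial σ LS) (μ : σ →₀ ℕ)
    (k : ℤ) : ((C (HahnSeries.single v c) * P).coeff μ).coeff k = c * (P.coeff μ).coeff (k - v) := by
  rw [coeff_C_mul]
  have := HahnSeries.coeff_single_mul_add (r := c) (x := P.coeff μ) (a := k - v) (b := v)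
  rw [show k = k - v + v by ring, this]
  congr 2
  ring

/-- If a nonzero homogeneous `f` of degree `d` satisfies
`f ≡ γ ε^N (∏ (1 + ℓᵢ) - 1) (mod ε)` with `N ≥ 1`, then `d ≤ m` and `f` is a
product of homogeneous linear forms over `ℂ`. -/
theorem statement9 {n d m : ℕ} (f : MvPolynomial (Fin n) ℂ) (hf0 : f ≠ 0)
    (hf : f.IsHomogeneous d)
    (γ : ℂ) (N : ℕ) (hN : 1 ≤ N)
    (ℓ : Fin m → MvPolynomial (Fin n) (LaurentSeries ℂ))
    (hhom : ∀ i, (ℓ i).IsHomogeneous 1)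
    (happrox : ApproxTo
      (C (HahnSeries.single (N : ℤ) γ) * ((∏ i, (1 + ℓ i)) - 1)) f) :
    d ≤ m ∧ ∃ (k : ℕ) (L : Fin k → MvPolynomial (Fin n) ℂ),
      (∀ i, (L i).IsHomogeneous 1) ∧ f = ∏ i, L i := by
  classical
  obtain ⟨hreg, hres⟩ := happrox
  set G : MvPolynomial (Fin n) LS := ∏ i, (1 + ℓ i) with hGdef
  have hγ : γ ≠ 0 := by
    intro h0
    apply hf0
    ext μ
    have hr := hres μ
    rw [h0] at hr
    simp at hr
    rw [← hr, coeff_zero]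
  have hl0 : ∀ i, (ℓ i).coeff 0 = 0 := fun i =>
    (hhom i).coeff_eq_zero (by simp [map_zero])
  have hPne : ∀ i, (1 + ℓ i : MvPolynomial (Fin n) LS) ≠ 0 := by
    intro i h0
    have h1 : MvPolynomial.coeff 0 (1 + ℓ i) = 1 := by
      rw [coeff_add, coeff_one, if_pos rfl, hl0 i, add_zero]
    rw [h0, coeff_zero] at h1
    exact one_ne_zero h1.symm
  choose v u hPu hu_reg hu_pres hu_supp using fun i => polyNormalize (1 + ℓ i) (hPne i)
  set S : ℤ := ∑ i, v i with hSdef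
  set U : MvPolynomial (Fin n) LS := ∏ i, u i with hUdef
  obtain ⟨hUreg, hUpres⟩ := hrc_prod Finset.univ u (fun i _ => hu_reg i)
  have hGU : G = C (HahnSeries.single S 1) * U := by
    rw [hGdef]
    calc ∏ i, (1 + ℓ i) = ∏ i, (C (HahnSeries.single (v i) 1) * u i) :=
          Finset.prod_congr rfl fun i _ => hPu i
      _ = (∏ i, C (HahnSeries.single (v i) (1:ℂ))) * U := Finset.prod_mul_distrib
      _ = C (HahnSeries.single S 1) * U := by
          rw [← map_prod, single_prod]
  have hH : C (HahnSeries.single (N:ℤ) γ) * G = C (HahnSeries.single ((N:ℤ) + S) γ) * U := by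
    rw [hGU, ← mul_assoc, ← C_mul, HahnSeries.single_mul_single, mul_one]
  have hdecomp : C (HahnSeries.single (N:ℤ) γ) * G
      = C (HahnSeries.single (N:ℤ) γ) * (G - 1) + C (HahnSeries.single (N:ℤ) γ) := by ring
  have hHreg : HasRegularCoeffs (C (HahnSeries.single (N:ℤ) γ) * G) := by
    rw [hdecomp]
    intro μ k hk
    rw [coeff_add, HahnSeries.coeff_add, hreg μ k hk, zero_add, coeff_C]
    split
    · exact HahnSeries.coeff_single_of_ne (by omega)
    · exact HahnSeries.coeff_zero
  have hHres : ∀ μ, ((C (HahnSeries.single (N:ℤ) γ) * G).coeff μ).coeff 0 = f.coeff μ := by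
    intro μ
    rw [hdecomp, coeff_add, HahnSeries.coeff_add, hres μ, coeff_C]
    have hsc : (HahnSeries.single (N:ℤ) γ).coeff 0 = 0 :=
      HahnSeries.coeff_single_of_ne (by omega)
    split
    · rw [hsc, add_zero]
    · rw [HahnSeries.coeff_zero, add_zero]
  set s : ℤ := (N:ℤ) + S with hsdef
  have hUne : pres U ≠ 0 := by
    rw [hUpres]
    exact Finset.prod_ne_zero_iff.mpr fun i _ => hu_pres i
  obtain ⟨μ0, hμ0⟩ := MvPolynomial.ne_zero_iff.mp hUne
  rw [pres_coeff] at hμ0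
  have hs0 : s = 0 := by
    rcases lt_trichotomy s 0 with h | h | h
    · exfalso
      have hz := hHreg μ0 s h
      rw [hH, coeff_single_C_mul', sub_self] at hz
      exact hμ0 ((mul_eq_zero.mp hz).resolve_left hγ)
    · exact h
    · exfalso
      apply hf0
      ext μ
      rw [coeff_zero, ← hHres μ, hH, coeff_single_C_mul', hUreg μ (0 - s) (by omega), mul_zero]
  have hfU : f = C γ * pres U := by
    ext μ
    rw [coeff_C_mul, pres_coeff, ← hHres μ, hH, coeff_single_C_mul', hs0, sub_zero]
  have hshape : ∀ i, ∃ (c : ℂ) (L : MvPolynomial (Fin n) ℂ),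
      L.IsHomogeneous 1 ∧ pres (u i) = C c + L := by
    intro i
    refine ⟨(pres (u i)).coeff 0, pres (u i) - C ((pres (u i)).coeff 0), ?_, by ring⟩
    intro μ hμ
    rw [Pi.one_def, ← Finsupp.degree_eq_weight_one]
    by_contra hdeg
    apply hμ
    rcases em (μ = 0) with rfl | hμ0
    · rw [coeff_sub, coeff_C, if_pos rfl, sub_self]
    · rw [coeff_sub, coeff_C, if_neg (fun hh => hμ0 hh.symm), sub_zero, pres_coeff,
        hu_supp i μ ?_, HahnSeries.coeff_zero]
      rw [coeff_add, coeff_one, if_neg (fun hh => hμ0 hh.symm), zero_add]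
      exact (hhom i).coeff_eq_zero hdeg
  rw [hUpres] at hfU
  obtain ⟨hdm, c, L, hLhom, hfL⟩ :=
    factorE m (fun i => pres (u i)) hshape d f hf0 hf γ hfU
  refine ⟨hdm, ?_⟩
  have hf00 : f.coeff 0 = 0 := by
    have hG0 : MvPolynomial.coeff 0 G = 1 := by
      have hcc := map_prod (MvPolynomial.constantCoeff (σ := Fin n) (R := LS))
        (fun i => 1 + ℓ i) Finset.univ
      rw [MvPolynomial.constantCoeff_eq] at hcc
      rw [hGdef]
      rw [show MvPolynomial.coeff 0 (∏ i, (1 + ℓ i))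
          = ∏ i, MvPolynomial.coeff 0 (1 + ℓ i) from hcc]
      refine Finset.prod_eq_one fun i _ => ?_
      rw [coeff_add, coeff_one, if_pos rfl, hl0 i, add_zero]
    have hr := hres 0
    rw [coeff_C_mul, coeff_sub, hG0, coeff_one, if_pos rfl, sub_self, mul_zero,
      HahnSeries.coeff_zero] at hr
    exact hr.symm
  have hd1 : 1 ≤ d := by
    by_contra hdc
    obtain ⟨μ, hμ⟩ := MvPolynomial.ne_zero_iff.mp hf0
    have hw := hf hμ
    rw [Pi.one_def, ← Finsupp.degree_eq_weight_one] at hw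
    have : μ = 0 := by
      rw [← Finsupp.degree_eq_zero_iff]
      omega
    rw [this] at hμ
    exact hμ hf00
  obtain ⟨d', rfl⟩ : ∃ d', d = d' + 1 := ⟨d - 1, by omega⟩
  refine ⟨d' + 1, Fin.cons (C c * L 0) (fun i => L i.succ), ?_, ?_⟩
  · intro i
    refine Fin.cases ?_ ?_ i
    · simpa using (hLhom 0).C_mul c
    · intro j
      simpa using hLhom j.succ
  · rw [Fin.prod_univ_succ, Fin.cons_zero]
    simp only [Fin.cons_succ]
    rw [hfL, Fin.prod_univ_succ]
    ring
end
end

section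
/- Let f ∈ ℂ[x_1,…,x_n] be homogeneous of degree d and suppose there exist γ ∈ ℂ and homogeneous linear forms ℓ_1, …, ℓ_m in x_1,…,x_n with coefficients in ℂ((ε)) such that γ (∏_{i=1}^m (1 + ℓ_i) − 1) has all coefficients in ℂ[[ε]] and is ≡ f (mod ε). Then the (exact, non-border) Waring rank of f satisfies WR(f) ≤ m. -/
open MvPolynomial

noncomputable section

namespace Statement10Aux

open Finset

/-- Coefficients of the image of a power series in the Laurent series ring. -/
lemma coeff_algebraMap (p : PowerSeries ℂ) (i : ℤ) :
    ((algebraMap (PowerSeries ℂ) (LaurentSeries ℂ)) p).coeff i =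
      if i < 0 then 0 else (PowerSeries.coeff i.natAbs) p := by
  rw [LaurentSeries.coe_algebraMap]
  exact PowerSeries.coeff_coe p i

lemma coeff_algebraMap_zero (p : PowerSeries ℂ) :
    ((algebraMap (PowerSeries ℂ) (LaurentSeries ℂ)) p).coeff (0 : ℤ) =
      PowerSeries.constantCoeff p := by
  rw [coeff_algebraMap]
  simp

/-- A Laurent series with no negative-order coefficients comes from a power series. -/
lemma mem_range_of_regular {z : LaurentSeries ℂ} (h : ∀ k : ℤ, k < 0 → z.coeff k = 0) :
    z ∈ Set.range (algebraMap (PowerSeries ℂ) (LaurentSeries ℂ)) := by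
  refine ⟨PowerSeries.mk (fun s => z.coeff (s : ℤ)), ?_⟩
  apply HahnSeries.coeff_injective
  funext i
  rw [coeff_algebraMap]
  split_ifs with hi
  · exact (h i hi).symm
  · push_neg at hi
    rw [PowerSeries.coeff_mk]
    congr 1
    exact Int.natAbs_of_nonneg hi

/-- `ℂ[[ε]]` is integrally closed in `ℂ((ε))`: integral elements are regular. -/
lemma regular_of_integral {v : LaurentSeries ℂ} (h : IsIntegral (PowerSeries ℂ) v) :
    ∀ k : ℤ, k < 0 → v.coeff k = 0 := by
  obtain ⟨p, hp⟩ := IsIntegrallyClosed.isIntegral_iff.mp h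
  intro k hk
  rw [← hp, coeff_algebraMap, if_pos hk]

lemma degree_single_one {σ : Type*} (j : σ) : (Finsupp.single j (1 : ℕ)).degree = 1 := by
  classical
  simp [Finsupp.degree_single]

/-- A finitely supported function of degree one is a single. -/
lemma degree_eq_one_exists {σ : Type*} {μ : σ →₀ ℕ} (h : μ.degree = 1) :
    ∃ j, μ = Finsupp.single j 1 := by
  classical
  have hdeg : μ.degree = ∑ i ∈ μ.support, μ i := rfl
  have hne : μ ≠ 0 := by
    intro h0
    rw [h0, map_zero] at h
    exact one_ne_zero h.symm
  obtain ⟨j, hj⟩ := Finsupp.support_nonempty_iff.mpr hne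
  refine ⟨j, ?_⟩
  have hj1 : 1 ≤ μ j := Nat.one_le_iff_ne_zero.mpr (Finsupp.mem_support_iff.mp hj)
  have hle : μ j ≤ μ.degree := by
    rw [hdeg]
    exact Finset.single_le_sum (fun i _ => Nat.zero_le _) hj
  ext i
  by_cases hij : i = j
  · subst hij
    rw [Finsupp.single_eq_same]
    omega
  · rw [Finsupp.single_eq_of_ne' (Ne.symm hij)]
    by_contra hi0
    have hi : i ∈ μ.support := Finsupp.mem_support_iff.mpr hi0
    have hsub : ({i, j} : Finset σ) ⊆ μ.support := by
      intro x hx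
      rcases Finset.mem_insert.mp hx with rfl | hx
      · exact hi
      · rwa [Finset.mem_singleton.mp hx]
    have h2 : μ i + μ j ≤ μ.degree := by
      rw [hdeg, ← Finset.sum_pair hij]
      exact Finset.sum_le_sum_of_subset hsub
    omega

/-- A homogeneous polynomial of degree 1 is a linear combination of the variables. -/
lemma homog_one_eq {R : Type*} [CommSemiring R] {n : ℕ} {p : MvPolynomial (Fin n) R}
    (hp : p.IsHomogeneous 1) :
    p = ∑ j, MvPolynomial.C (p.coeff (Finsupp.single j 1)) * X j := by
  classical
  ext μ
  rw [MvPolynomial.coeff_sum]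
  simp_rw [coeff_C_mul, coeff_X']
  by_cases hμ : μ.degree = 1
  · obtain ⟨j0, rfl⟩ := degree_eq_one_exists hμ
    rw [Finset.sum_eq_single j0]
    · rw [if_pos rfl, mul_one]
    · intro j _ hj
      rw [if_neg, mul_zero]
      intro hcon
      exact hj ((Finsupp.single_left_inj one_ne_zero).mp hcon)
    · intro h
      exact absurd (Finset.mem_univ j0) h
  · rw [hp.coeff_eq_zero hμ]
    symm
    apply Finset.sum_eq_zero
    intro j _
    rw [if_neg, mul_zero]
    intro hcon
    rw [← hcon, degree_single_one] at hμ
    exact hμ rfl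

/-- Naturality of `aeval` with respect to a ring homomorphism of coefficients. -/
lemma map_aeval' {R S : Type*} [CommSemiring R] [CommSemiring S] {n m : ℕ}
    (θ : R →+* S) (L : Fin m → MvPolynomial (Fin n) R) (q : MvPolynomial (Fin m) R) :
    MvPolynomial.map θ (aeval L q) =
      aeval (fun i => MvPolynomial.map θ (L i)) (MvPolynomial.map θ q) := by
  rw [aeval_def, aeval_def, MvPolynomial.algebraMap_eq, MvPolynomial.algebraMap_eq,
    MvPolynomial.map_eval₂, MvPolynomial.eval₂_map, MvPolynomial.eval₂_map]
  rfl

lemma aeval_esymm_isHomogeneous {R : Type*} [CommRing R] {n m : ℕ}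
    (u : Fin m → MvPolynomial (Fin n) R) (hu : ∀ i, (u i).IsHomogeneous 1) (k : ℕ) :
    (aeval u (esymm (Fin m) R k)).IsHomogeneous k := by
  classical
  rw [esymm, map_sum]
  apply MvPolynomial.IsHomogeneous.sum
  intro t ht
  rw [map_prod]
  simp only [aeval_X]
  have h := MvPolynomial.IsHomogeneous.prod t u (fun _ => 1) (fun i _ => hu i)
  rwa [Finset.sum_const, smul_eq_mul, mul_one, (Finset.mem_powersetCard.mp ht).2] at h

lemma esymm_eq_zero' {R : Type*} [CommRing R] {m k : ℕ} (h : m < k) :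
    esymm (Fin m) R k = 0 := by
  classical
  rw [esymm, Finset.powersetCard_eq_empty.mpr (by simpa using h), Finset.sum_empty]

/-- Lift a multivariate polynomial whose coefficients lie in the image of `ℂ[[ε]]`. -/
lemma exists_map_eq {σ : Type*} (g : MvPolynomial σ (LaurentSeries ℂ))
    (h : ∀ μ, g.coeff μ ∈ Set.range (algebraMap (PowerSeries ℂ) (LaurentSeries ℂ))) :
    ∃ gP : MvPolynomial σ (PowerSeries ℂ),
      MvPolynomial.map (algebraMap (PowerSeries ℂ) (LaurentSeries ℂ)) gP = g := by
  classical
  choose c hc using h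
  refine ⟨∑ μ ∈ g.support, monomial μ (c μ), ?_⟩
  rw [map_sum]
  have : ∀ μ ∈ g.support,
      MvPolynomial.map (algebraMap (PowerSeries ℂ) (LaurentSeries ℂ)) (monomial μ (c μ)) =
        monomial μ (g.coeff μ) := by
    intro μ _
    rw [MvPolynomial.map_monomial, hc]
  rw [Finset.sum_congr rfl this, support_sum_monomial_coeff]

end Statement10Aux

open Statement10Aux Finset

/-- Newton identities: if `f ≡ γ (∏ (1 + ℓᵢ) - 1) (mod ε)` with `γ ∈ ℂ` a genuine
complex constant, then the (exact) Waring rank of `f` is at most `m`. -/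
theorem statement10 {n d m : ℕ} (f : MvPolynomial (Fin n) ℂ) (hf : f.IsHomogeneous d)
    (γ : ℂ) (ℓ : Fin m → MvPolynomial (Fin n) (LaurentSeries ℂ))
    (hhom : ∀ i, (ℓ i).IsHomogeneous 1)
    (happrox : ApproxTo
      (C (HahnSeries.C γ : LaurentSeries ℂ) * ((∏ i, (1 + ℓ i)) - 1)) f) :
    waringRank f d ≤ m := by
  classical
  obtain ⟨hreg, hval⟩ := happrox
  have hzero : waringRank (0 : MvPolynomial (Fin n) ℂ) d ≤ m := by
    have h0 : 0 ∈ {r | ∃ ℓ' : Fin r → MvPolynomial (Fin n) ℂ,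
        (∀ i, (ℓ' i).IsHomogeneous 1) ∧ (0 : MvPolynomial (Fin n) ℂ) = ∑ i, ℓ' i ^ d} := by
      refine ⟨Fin.elim0, fun i => i.elim0, ?_⟩
      rw [Finset.univ_eq_empty, Finset.sum_empty]
    exact le_trans (Nat.sInf_le h0) (Nat.zero_le m)
  by_cases hγ : γ = 0
  · have hf0 : f = 0 := by
      ext μ
      have h := hval μ
      rw [hγ] at h
      simp only [map_zero, zero_mul, MvPolynomial.coeff_zero, HahnSeries.coeff_zero] at h
      rw [← h, MvPolynomial.coeff_zero]
    rw [hf0]; exact hzero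
  -- the product expansion into elementary symmetric polynomials
  have hprod : (∏ i, (1 + ℓ i)) =
      ∑ k ∈ Finset.range (m + 1), aeval ℓ (esymm (Fin m) (LaurentSeries ℂ) k) := by
    have h1 : (∏ i, (1 + ℓ i)) = ∏ i, (ℓ i + 1) := by simp_rw [add_comm]
    rw [h1, Finset.prod_add]
    simp only [Finset.prod_const_one, mul_one]
    rw [Finset.sum_powerset, Finset.card_univ, Fintype.card_fin]
    refine Finset.sum_congr rfl fun k _ => ?_
    rw [esymm, map_sum]
    refine Finset.sum_congr rfl fun t _ => ?_
    rw [map_prod]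
    simp only [aeval_X]
  have hEhom : ∀ k, (aeval ℓ (esymm (Fin m) (LaurentSeries ℂ) k)).IsHomogeneous k :=
    aeval_esymm_isHomogeneous ℓ hhom
  have hEzero : ∀ k, m < k → aeval ℓ (esymm (Fin m) (LaurentSeries ℂ) k) = 0 := by
    intro k hk
    rw [esymm_eq_zero' hk, map_zero]
  -- structure of the coefficients of F
  have hFcoeff : ∀ μ : Fin n →₀ ℕ, 1 ≤ μ.degree →
      (C (HahnSeries.C γ : LaurentSeries ℂ) * ((∏ i, (1 + ℓ i)) - 1)).coeff μ =
        HahnSeries.C γ * (aeval ℓ (esymm (Fin m) (LaurentSeries ℂ) μ.degree)).coeff μ := by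
    intro μ hμ
    rw [coeff_C_mul]
    congr 1
    have hμ0 : μ ≠ 0 := by
      intro h0
      rw [h0, map_zero] at hμ
      omega
    have hone : MvPolynomial.coeff μ (1 : MvPolynomial (Fin n) (LaurentSeries ℂ)) = 0 := by
      rw [MvPolynomial.coeff_one, if_neg (fun h => hμ0 h.symm)]
    rw [coeff_sub, hone, sub_zero, hprod, MvPolynomial.coeff_sum]
    by_cases hle : μ.degree ≤ m
    · rw [Finset.sum_eq_single μ.degree]
      · intro k _ hk
        exact (hEhom k).coeff_eq_zero (fun hc => hk hc.symm)
      · intro hnot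
        exact absurd (Finset.mem_range.mpr (by omega)) hnot
    · push_neg at hle
      rw [hEzero _ hle, MvPolynomial.coeff_zero]
      apply Finset.sum_eq_zero
      intro k hk
      have hkm := Finset.mem_range.mp hk
      exact (hEhom k).coeff_eq_zero (by omega)
  -- regularity of the coefficients of the elementary symmetric evaluations
  have hEreg : ∀ k (μ : Fin n →₀ ℕ), ∀ j : ℤ, j < 0 →
      ((aeval ℓ (esymm (Fin m) (LaurentSeries ℂ) k)).coeff μ).coeff j = 0 := by
    intro k μ j hj
    by_cases hdeg : μ.degree = k
    · subst hdeg
      by_cases h0 : 1 ≤ μ.degree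
      · have h := hreg μ j hj
        rw [hFcoeff μ h0, HahnSeries.C_mul_eq_smul, HahnSeries.coeff_smul, smul_eq_mul] at h
        exact (mul_eq_zero.mp h).resolve_left hγ
      · have hμ0 : μ.degree = 0 := by omega
        rw [hμ0, esymm_zero, map_one, MvPolynomial.coeff_one]
        split_ifs
        · rw [HahnSeries.coeff_one, if_neg (by omega)]
        · exact HahnSeries.coeff_zero
    · rw [(hEhom k).coeff_eq_zero hdeg, HahnSeries.coeff_zero]
  have hEmem : ∀ k (μ : Fin n →₀ ℕ),
      (aeval ℓ (esymm (Fin m) (LaurentSeries ℂ) k)).coeff μ ∈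
        Set.range (algebraMap (PowerSeries ℂ) (LaurentSeries ℂ)) :=
    fun k μ => mem_range_of_regular (fun j hj => hEreg k μ j hj)
  -- all coefficients of the ℓ i are regular
  have hφinj : Function.Injective (algebraMap (PowerSeries ℂ) (LaurentSeries ℂ)) :=
    IsFractionRing.injective _ _
  have hint : ∀ (w : Fin n → LaurentSeries ℂ),
      (∀ j, w j ∈ (algebraMap (PowerSeries ℂ) (LaurentSeries ℂ)).range) →
      ∀ i' : Fin m, IsIntegral (PowerSeries ℂ) (aeval w (ℓ i')) := by
    intro w hwmem i'
    have haev : ∀ p : MvPolynomial (Fin n) (LaurentSeries ℂ), aeval w p = eval w p :=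
      fun p => by simp [aeval_def]
    set Q : Polynomial (LaurentSeries ℂ) :=
      ∏ i'' : Fin m, (Polynomial.X - Polynomial.C (aeval w (ℓ i''))) with hQ
    have hQmonic : Q.Monic :=
      Polynomial.monic_prod_of_monic _ _ fun i'' _ => Polynomial.monic_X_sub_C _
    have hQdeg : Q.natDegree = m := by
      rw [hQ, Polynomial.natDegree_prod _ _
        (fun i'' _ => (Polynomial.monic_X_sub_C (aeval w (ℓ i''))).ne_zero)]
      simp
    have hQlift : ∀ r : ℕ, Q.coeff r ∈
        Set.range (algebraMap (PowerSeries ℂ) (LaurentSeries ℂ)) := by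
      intro r
      by_cases hr : r ≤ m
      · have hcard : Multiset.card
            (Multiset.map (fun i'' => aeval w (ℓ i'')) Finset.univ.val) = m := by
          simp
        have hQc : Q.coeff r = (-1) ^ (m - r) *
            (Multiset.map (fun i'' => aeval w (ℓ i'')) Finset.univ.val).esymm (m - r) := by
          have hQme : Q = (Multiset.map (fun t => Polynomial.X - Polynomial.C t)
              (Multiset.map (fun i'' => aeval w (ℓ i'')) Finset.univ.val)).prod := by
            rw [hQ, Finset.prod_eq_multiset_prod, Multiset.map_map]
            rfl
          rw [hQme, Multiset.prod_X_sub_C_coeff _ (by rw [hcard]; exact hr), hcard]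
        have hmes : (Multiset.map (fun i'' => aeval w (ℓ i'')) Finset.univ.val).esymm (m - r) =
            aeval w (aeval ℓ (esymm (Fin m) (LaurentSeries ℂ) (m - r))) := by
          rw [← aeval_esymm_eq_multiset_esymm (Fin m) (LaurentSeries ℂ) (m - r)
            (fun i'' => aeval w (ℓ i'')), comp_aeval_apply]
        have hmem : aeval w (aeval ℓ (esymm (Fin m) (LaurentSeries ℂ) (m - r))) ∈
            (algebraMap (PowerSeries ℂ) (LaurentSeries ℂ)).range := by
          rw [haev]
          apply MvPolynomial.eval_mem
          · intro μ' _
            exact RingHom.mem_range.mpr (hEmem (m - r) μ')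
          · exact hwmem
        obtain ⟨p, hp⟩ := RingHom.mem_range.mp hmem
        refine ⟨(-1) ^ (m - r) * p, ?_⟩
        rw [map_mul, map_pow, map_neg, map_one, hp, hQc, hmes]
      · push_neg at hr
        rw [Polynomial.coeff_eq_zero_of_natDegree_lt (by omega)]
        exact ⟨0, map_zero _⟩
    obtain ⟨q, hqmap, _, hqmonic⟩ :=
      Polynomial.lifts_and_degree_eq_and_monic
        ((Polynomial.lifts_iff_coeff_lifts Q).mpr hQlift) hQmonic
    refine ⟨q, hqmonic, ?_⟩
    rw [Polynomial.eval₂_eq_eval_map, hqmap, hQ, Polynomial.eval_prod]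
    apply Finset.prod_eq_zero (Finset.mem_univ i')
    simp
  have hlcoeff : ∀ i (μ : Fin n →₀ ℕ),
      (ℓ i).coeff μ ∈ Set.range (algebraMap (PowerSeries ℂ) (LaurentSeries ℂ)) := by
    intro i μ
    by_cases hdeg : μ.degree = 1
    · obtain ⟨j0, rfl⟩ := degree_eq_one_exists hdeg
      have hwmem : ∀ j : Fin n,
          ((HahnSeries.C (if j = j0 then (1:ℂ) else 0)) : LaurentSeries ℂ) ∈
            (algebraMap (PowerSeries ℂ) (LaurentSeries ℂ)).range := by
        intro j
        refine RingHom.mem_range.mpr ⟨PowerSeries.C (if j = j0 then 1 else 0), ?_⟩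
        rw [LaurentSeries.coe_algebraMap, HahnSeries.ofPowerSeries_C]
      have hint' := hint
        (fun j => ((HahnSeries.C (if j = j0 then (1:ℂ) else 0)) : LaurentSeries ℂ)) hwmem i
      have hval_eq :
          aeval (fun j => ((HahnSeries.C (if j = j0 then (1:ℂ) else 0)) : LaurentSeries ℂ))
              (ℓ i) = (ℓ i).coeff (Finsupp.single j0 1) := by
        conv_lhs => rw [homog_one_eq (hhom i)]
        rw [map_sum, Finset.sum_eq_single j0]
        · rw [map_mul, aeval_C, aeval_X]
          simp
        · intro j _ hj
          rw [map_mul, aeval_C, aeval_X]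
          simp [hj]
        · intro h
          exact absurd (Finset.mem_univ j0) h
      rw [← hval_eq]
      exact mem_range_of_regular (regular_of_integral hint')
    · rw [(hhom i).coeff_eq_zero hdeg]
      exact ⟨0, map_zero _⟩
  -- lift the linear forms to ℂ[[ε]]
  choose L hL using fun i => exists_map_eq (ℓ i) (hlcoeff i)
  set ψ := PowerSeries.constantCoeff (R := ℂ) with hψdef
  set ℓ0 : Fin m → MvPolynomial (Fin n) ℂ := fun i => MvPolynomial.map ψ (L i) with hℓ0
  have hLhom : ∀ i, (L i).IsHomogeneous 1 := by
    intro i μ hμ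
    apply hhom i
    rw [← hL i, MvPolynomial.coeff_map]
    exact (map_ne_zero_iff _ hφinj).mpr hμ
  have hℓ0hom : ∀ i, (ℓ0 i).IsHomogeneous 1 := fun i => (hLhom i).map ψ
  -- naturality of the symmetric evaluations
  have hEK : ∀ k, aeval ℓ (esymm (Fin m) (LaurentSeries ℂ) k) =
      MvPolynomial.map (algebraMap (PowerSeries ℂ) (LaurentSeries ℂ))
        (aeval L (esymm (Fin m) (PowerSeries ℂ) k)) := by
    intro k
    rw [map_aeval', map_esymm]
    simp only [hL]
  have hek : ∀ k, aeval ℓ0 (esymm (Fin m) ℂ k) =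
      MvPolynomial.map ψ (aeval L (esymm (Fin m) (PowerSeries ℂ) k)) := by
    intro k
    rw [map_aeval', map_esymm]
  have hekhom : ∀ k, (aeval ℓ0 (esymm (Fin m) ℂ k)).IsHomogeneous k :=
    aeval_esymm_isHomogeneous ℓ0 hℓ0hom
  -- key identity: γ • e_k ≡ δ_{kd} f
  have hkey : ∀ k, 1 ≤ k →
      C γ * aeval ℓ0 (esymm (Fin m) ℂ k) = if k = d then f else 0 := by
    intro k hk
    ext μ
    rw [MvPolynomial.coeff_C_mul]
    by_cases hdeg : μ.degree = k
    · have h1 := hval μ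
      rw [hFcoeff μ (by omega), hdeg, hEK k, MvPolynomial.coeff_map,
        HahnSeries.C_mul_eq_smul, HahnSeries.coeff_smul, smul_eq_mul,
        coeff_algebraMap_zero] at h1
      rw [hek k, MvPolynomial.coeff_map]
      split_ifs with hkd
      · exact h1
      · rw [MvPolynomial.coeff_zero]
        rw [h1]
        exact hf.coeff_eq_zero (by omega)
    · rw [(hekhom k).coeff_eq_zero hdeg, mul_zero]
      split_ifs with hkd
      · exact (hf.coeff_eq_zero (by omega)).symm
      · rw [MvPolynomial.coeff_zero]
  -- the degenerate case d = 0
  by_cases hd0 : d = 0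
  · subst hd0
    have hf0 : f = 0 := by
      ext μ
      rw [MvPolynomial.coeff_zero]
      by_cases hμ : μ = 0
      · subst hμ
        have h1 := hval 0
        have hcF : MvPolynomial.coeff 0
            (C (HahnSeries.C γ : LaurentSeries ℂ) * ((∏ i, (1 + ℓ i)) - 1)) = 0 := by
          rw [coeff_C_mul, coeff_sub, hprod, MvPolynomial.coeff_sum,
            Finset.sum_eq_single 0 (fun k _ hk =>
              (hEhom k).coeff_eq_zero (by simpa [map_zero] using Ne.symm hk))
              (fun h => absurd (Finset.mem_range.mpr (by omega)) h)]
          rw [esymm_zero, map_one, sub_self, mul_zero]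
        rw [← h1, hcF, HahnSeries.coeff_zero]
      · exact hf.coeff_eq_zero (by
          rw [Ne, Finsupp.degree_eq_zero_iff]
          exact hμ)
    rw [hf0]; exact hzero
  have hd1 : 1 ≤ d := Nat.one_le_iff_ne_zero.mpr hd0
  -- consequences of the key identity
  have hek0 : ∀ k, 1 ≤ k → k ≠ d → aeval ℓ0 (esymm (Fin m) ℂ k) = 0 := by
    intro k h1 h2
    have h := hkey k h1
    rw [if_neg h2] at h
    rcases mul_eq_zero.mp h with hC | he
    · exact absurd (MvPolynomial.C_eq_zero.mp hC) hγ
    · exact he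
  have hekd : C γ * aeval ℓ0 (esymm (Fin m) ℂ d) = f := by
    have h := hkey d hd1
    rwa [if_pos rfl] at h
  -- Newton's identities over ℂ
  have hnewton : ∀ k : ℕ, 0 < k →
      aeval ℓ0 (psum (Fin m) ℂ k) =
        (-1) ^ (k + 1) * (k : MvPolynomial (Fin n) ℂ) * aeval ℓ0 (esymm (Fin m) ℂ k) -
          ∑ a ∈ (Finset.HasAntidiagonal.antidiagonal k).filter (fun a => a.1 ∈ Set.Ioo 0 k),
            (-1) ^ a.1 * aeval ℓ0 (esymm (Fin m) ℂ a.1) * aeval ℓ0 (psum (Fin m) ℂ a.2) := by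
    intro k hk
    have h := congrArg (aeval ℓ0) (psum_eq_mul_esymm_sub_sum (Fin m) ℂ k hk)
    simpa only [map_sub, map_mul, map_sum, map_pow, map_neg, map_one, map_natCast] using h
  have hplow : ∀ k, 0 < k → k < d → aeval ℓ0 (psum (Fin m) ℂ k) = 0 := by
    intro k
    induction k using Nat.strong_induction_on with
    | _ k ih =>
      intro hk0 hkd
      rw [hnewton k hk0, hek0 k hk0 (Nat.ne_of_lt hkd), mul_zero, zero_sub, neg_eq_zero]
      apply Finset.sum_eq_zero
      intro a ha
      obtain ⟨hmem, hIoo⟩ := Finset.mem_filter.mp ha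
      obtain ⟨h01, h1k⟩ := Set.mem_Ioo.mp hIoo
      rw [hek0 a.1 h01 (Nat.ne_of_lt (lt_trans h1k hkd)), mul_zero, zero_mul]
  have hpd : aeval ℓ0 (psum (Fin m) ℂ d) =
      (-1) ^ (d + 1) * (d : MvPolynomial (Fin n) ℂ) * aeval ℓ0 (esymm (Fin m) ℂ d) := by
    rw [hnewton d hd1]
    rw [Finset.sum_eq_zero, sub_zero]
    intro a ha
    obtain ⟨hmem, hIoo⟩ := Finset.mem_filter.mp ha
    obtain ⟨h01, h1d⟩ := Set.mem_Ioo.mp hIoo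
    have hsum := Finset.HasAntidiagonal.mem_antidiagonal.mp hmem
    have h2 : 0 < a.2 ∧ a.2 < d := by omega
    rw [hplow a.2 h2.1 h2.2, mul_zero]
  -- conclusion
  obtain ⟨c, hc⟩ := IsAlgClosed.exists_pow_nat_eq ((-1) ^ (d + 1) * γ / d) hd1
  have hps : aeval ℓ0 (psum (Fin m) ℂ d) = ∑ i, ℓ0 i ^ d := by
    rw [psum, map_sum]
    refine Finset.sum_congr rfl fun i _ => ?_
    rw [map_pow, aeval_X]
  have hscal : c ^ d * ((-1 : ℂ) ^ (d + 1) * (d : ℂ)) = γ := by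
    have hd2 : ((-1 : ℂ) ^ (d + 1)) * ((-1 : ℂ) ^ (d + 1)) = 1 := by
      rw [← pow_add]
      exact Even.neg_one_pow ⟨d + 1, by ring⟩
    have hdne : (d : ℂ) ≠ 0 := Nat.cast_ne_zero.mpr hd0
    rw [hc]
    field_simp
    linear_combination hd2
  have hsum : f = ∑ i, (C c * ℓ0 i) ^ d := by
    have h2 : ∑ i, (C c * ℓ0 i) ^ d = C (c ^ d) * ∑ i, ℓ0 i ^ d := by
      rw [Finset.mul_sum]
      refine Finset.sum_congr rfl fun i _ => ?_
      rw [mul_pow, ← map_pow]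
    rw [h2, ← hps, hpd, ← hekd]
    have hcast1 : ((-1 : MvPolynomial (Fin n) ℂ)) ^ (d + 1) = C ((-1 : ℂ) ^ (d + 1)) := by
      rw [map_pow, map_neg, map_one]
    have hcast2 : ((d : ℕ) : MvPolynomial (Fin n) ℂ) = C ((d : ℂ)) := by
      rw [map_natCast]
    rw [hcast1, hcast2, ← hscal, map_mul, map_mul]
    ring
  have hmem : m ∈ {r | ∃ ℓ' : Fin r → MvPolynomial (Fin n) ℂ,
      (∀ i, (ℓ' i).IsHomogeneous 1) ∧ f = ∑ i, ℓ' i ^ d} :=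
    ⟨fun i => C c * ℓ0 i, fun i => (hℓ0hom i).C_mul c, hsum⟩
  exact Nat.sInf_le hmem
end
end

section
/- Let f ∈ ℂ[x_1,…,x_n] be homogeneous of degree d and suppose there exist s affine linear forms ℓ_1, …, ℓ_s in x_1,…,x_n with coefficients in ℂ((ε)) and exponents e_1, …, e_s ∈ ℕ such that ∑_{i=1}^s ℓ_i^{e_i} has all coefficients in ℂ[[ε]] and is ≡ f (mod ε). Then the border Waring rank of f satisfies bWR(f) ≤ s. -/
open MvPolynomial

noncomputable section

namespace St14

open PowerSeries

variable {K : Type*} [Field K]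

lemma mem_spanX_pow {n : ℕ} {x : PowerSeries K} :
    x ∈ (Ideal.span {(PowerSeries.X : PowerSeries K)}) ^ n ↔
      ∀ m < n, PowerSeries.coeff m x = 0 := by
  rw [Ideal.span_singleton_pow, Ideal.mem_span_singleton, PowerSeries.X_pow_dvd_iff]

lemma smul_top_mem {R : Type*} [CommRing R] (I : Ideal R) (x : R) :
    x ∈ I • (⊤ : Submodule R R) ↔ x ∈ I := by
  rw [Ideal.smul_eq_mul, Ideal.mul_top]

instance psAdic : IsAdicComplete (Ideal.span {(PowerSeries.X : PowerSeries K)}) (PowerSeries K) where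
  haus' := by
    intro x hx
    ext m
    have := hx (m + 1)
    rw [SModEq.zero, smul_top_mem, mem_spanX_pow] at this
    simpa using this m (by omega)
  prec' := by
    intro f hf
    refine ⟨PowerSeries.mk fun m => PowerSeries.coeff m (f (m + 1)), fun n => ?_⟩
    rw [SModEq.sub_mem, smul_top_mem, mem_spanX_pow]
    intro m hm
    have h := hf (show m + 1 ≤ n by omega)
    rw [SModEq.sub_mem, smul_top_mem, mem_spanX_pow] at h
    have := h m (by omega)
    simp only [map_sub] at this ⊢
    simp only [coeff_mk]
    rw [sub_eq_zero] at this ⊢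
    exact this.symm

lemma ps_root {d : ℕ} (hd : 1 ≤ d) (u : PowerSeries ℂ)
    (hu : PowerSeries.constantCoeff u ≠ 0) : ∃ r : PowerSeries ℂ, r ^ d = u := by
  obtain ⟨z, hz⟩ := IsAlgClosed.exists_pow_nat_eq (PowerSeries.constantCoeff u)
    (show 0 < d by omega)
  have hz0 : z ≠ 0 := fun h => hu (by rw [← hz, h, zero_pow (by omega)])
  set I : Ideal (PowerSeries ℂ) := Ideal.span {PowerSeries.X} with hI
  set F : Polynomial (PowerSeries ℂ) := Polynomial.X ^ d - Polynomial.C u with hF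
  have hmonic : F.Monic := Polynomial.monic_X_pow_sub_C u (by omega)
  have h1 : F.eval (PowerSeries.C z) ∈ I := by
    rw [hI, Ideal.mem_span_singleton, PowerSeries.X_dvd_iff]
    simp [hF, hz]
  have h2 : IsUnit (Ideal.Quotient.mk I (F.derivative.eval (PowerSeries.C z))) := by
    apply IsUnit.map
    rw [PowerSeries.isUnit_iff_constantCoeff]
    simp only [hF, Polynomial.derivative_sub, Polynomial.derivative_C,
      Polynomial.derivative_X_pow, sub_zero, Polynomial.eval_mul, Polynomial.eval_natCast,
      Polynomial.eval_pow, Polynomial.eval_X, Polynomial.eval_C]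
    simp only [map_mul, map_pow, map_natCast, PowerSeries.constantCoeff_C]
    exact IsUnit.mul (by simp; positivity) (IsUnit.pow _ (Ne.isUnit hz0))
  obtain ⟨a, ha, -⟩ := HenselianRing.is_henselian (R := PowerSeries ℂ) (I := I)
    F hmonic _ h1 h2
  refine ⟨a, ?_⟩
  have := ha
  simp only [Polynomial.IsRoot, hF, Polynomial.eval_sub, Polynomial.eval_pow,
    Polynomial.eval_X, Polynomial.eval_C, sub_eq_zero] at this
  exact this

/-- multiplication by `d` as an additive hom on `ℤ`. -/
def dmul (d : ℕ) : ℤ →+ ℤ where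
  toFun k := d * k
  map_zero' := by simp
  map_add' a b := by ring

lemma dmul_inj {d : ℕ} (hd : 1 ≤ d) : Function.Injective (dmul d) := by
  intro a b h
  simp only [dmul, AddMonoidHom.coe_mk, ZeroHom.coe_mk] at h
  exact mul_left_cancel₀ (by exact_mod_cast by omega : (d : ℤ) ≠ 0) h

lemma dmul_le {d : ℕ} (hd : 1 ≤ d) : ∀ g g' : ℤ, dmul d g ≤ dmul d g' ↔ g ≤ g' := by
  intro g g'
  simp only [dmul, AddMonoidHom.coe_mk, ZeroHom.coe_mk]
  exact mul_le_mul_iff_right₀ (by exact_mod_cast hd)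

/-- The ring embedding `ε ↦ ε^d` of Laurent series. -/
def Phi {d : ℕ} (hd : 1 ≤ d) : LaurentSeries ℂ →+* LaurentSeries ℂ :=
  HahnSeries.embDomainRingHom (dmul d) (dmul_inj hd) (dmul_le hd)

lemma Phi_coeff_mul {d : ℕ} (hd : 1 ≤ d) (x : LaurentSeries ℂ) (k : ℤ) :
    (Phi hd x).coeff (d * k) = x.coeff k := by
  have : ((d : ℤ) * k) = dmul d k := rfl
  rw [this]
  simp only [Phi, HahnSeries.embDomainRingHom_apply]
  exact HahnSeries.embDomain_coeff

lemma Phi_coeff_not_dvd {d : ℕ} (hd : 1 ≤ d) (x : LaurentSeries ℂ) (j : ℤ)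
    (hj : ¬ (d : ℤ) ∣ j) : (Phi hd x).coeff j = 0 := by
  apply HahnSeries.embDomain_notin_range
  rintro ⟨a, rfl⟩
  exact hj ⟨a, rfl⟩

lemma laurent_root {d : ℕ} (hd : 1 ≤ d) (x : LaurentSeries ℂ) (hx : x ≠ 0)
    (hdvd : (d : ℤ) ∣ x.order) : ∃ r : LaurentSeries ℂ, r ^ d = x := by
  obtain ⟨w, hw⟩ := hdvd
  have hu : PowerSeries.constantCoeff x.powerSeriesPart ≠ 0 := by
    rw [← PowerSeries.coeff_zero_eq_constantCoeff_apply, LaurentSeries.powerSeriesPart_coeff]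
    simpa using HahnSeries.coeff_order_eq_zero.not.2 hx
  obtain ⟨P, hP⟩ := ps_root hd x.powerSeriesPart hu
  refine ⟨HahnSeries.single w 1 * HahnSeries.ofPowerSeries ℤ ℂ P, ?_⟩
  rw [mul_pow, HahnSeries.single_pow, one_pow, ← map_pow, hP]
  rw [show (d • w : ℤ) = x.order by rw [hw]; simp [nsmul_eq_mul]]
  exact LaurentSeries.single_order_mul_powerSeriesPart x

lemma Phi_root {d : ℕ} (hd : 1 ≤ d) (c : LaurentSeries ℂ) :
    ∃ r : LaurentSeries ℂ, r ^ d = Phi hd c := by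
  rcases eq_or_ne c 0 with rfl | hc
  · exact ⟨0, by rw [zero_pow (by omega), map_zero]⟩
  · have hne : Phi hd c ≠ 0 := fun h => hc (by
      apply HahnSeries.embDomain_injective (f := ⟨⟨dmul d, dmul_inj hd⟩, dmul_le hd _ _⟩)
      simpa [Phi, HahnSeries.embDomainRingHom] using h)
    apply laurent_root hd _ hne
    by_contra hnd
    exact HahnSeries.coeff_order_eq_zero.not.2 hne (Phi_coeff_not_dvd hd c _ hnd)

section MvAux

variable {σ : Type*}

lemma affine_decomp {R : Type*} [CommRing R] (p : MvPolynomial σ R)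
    (hp : p.totalDegree ≤ 1) : p = MvPolynomial.C (p.coeff 0) + homogeneousComponent 1 p := by
  conv_lhs => rw [← sum_homogeneousComponent p]
  rcases Nat.le_one_iff_eq_zero_or_eq_one.mp hp with h | h
  · rw [h, Finset.sum_range_one, homogeneousComponent_zero,
      homogeneousComponent_eq_zero 1 p (by rw [h]; norm_num), add_zero]
  · rw [h, Finset.sum_range_succ, Finset.sum_range_one, homogeneousComponent_zero]

lemma hc_pow (a : LaurentSeries ℂ) (m : MvPolynomial σ (LaurentSeries ℂ))
    (hm : m.IsHomogeneous 1) (e d : ℕ) :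
    homogeneousComponent d ((MvPolynomial.C a + m) ^ e) =
      MvPolynomial.C (if d ≤ e then (e.choose d : LaurentSeries ℂ) * a ^ (e - d) else 0) * m ^ d := by
  rw [add_comm (MvPolynomial.C a) m, add_pow, map_sum]
  have hterm : ∀ k : ℕ, m ^ k * MvPolynomial.C a ^ (e - k) * ((e.choose k : ℕ) : MvPolynomial σ (LaurentSeries ℂ))
      = MvPolynomial.C (((e.choose k : ℕ) : LaurentSeries ℂ) * a ^ (e - k)) * m ^ k := by
    intro k
    rw [map_mul, ← map_natCast (MvPolynomial.C : LaurentSeries ℂ →+* MvPolynomial σ (LaurentSeries ℂ)), map_pow]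
    ring
  have hcomp : ∀ k : ℕ, homogeneousComponent d
      (m ^ k * MvPolynomial.C a ^ (e - k) * ((e.choose k : ℕ) : MvPolynomial σ (LaurentSeries ℂ)))
      = MvPolynomial.C (((e.choose k : ℕ) : LaurentSeries ℂ) * a ^ (e - k)) *
          (if d = k then m ^ k else 0) := by
    intro k
    rw [hterm k, homogeneousComponent_C_mul]
    congr 1
    refine homogeneousComponent_of_mem ?_
    rw [mem_homogeneousSubmodule]
    simpa using hm.pow k
  simp_rw [hcomp]
  simp_rw [mul_ite, mul_zero]
  rw [Finset.sum_ite_eq (Finset.range (e + 1)) d]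
  split_ifs with h1 h2 h3
  · rfl
  · exact absurd (Nat.lt_succ_iff.mp (Finset.mem_range.mp h1)) h2
  · exact absurd (Finset.mem_range.mpr (Nat.lt_succ_iff.mpr h3)) h1
  · rw [map_zero, zero_mul]

lemma ishomog_map {p : MvPolynomial σ (LaurentSeries ℂ)} {k : ℕ} (hp : p.IsHomogeneous k)
    (φ : LaurentSeries ℂ →+* LaurentSeries ℂ) : (MvPolynomial.map φ p).IsHomogeneous k := by
  intro m hm
  apply hp
  rw [MvPolynomial.coeff_map] at hm
  intro h0
  rw [h0, map_zero] at hm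
  exact hm rfl

end MvAux

end St14

lemma approx_hc {σ : Type*} {f : MvPolynomial σ ℂ} {F : MvPolynomial σ (LaurentSeries ℂ)} {d : ℕ}
    (hf : f.IsHomogeneous d) (h : ApproxTo F f) :
    ApproxTo (homogeneousComponent d F) f := by
  constructor
  · intro m k hk
    rw [coeff_homogeneousComponent]
    split_ifs with h'
    · exact h.1 m k hk
    · simp
  · intro m
    rw [coeff_homogeneousComponent]
    split_ifs with h'
    · exact h.2 m
    · simpa using (hf.coeff_eq_zero h').symm

lemma approx_map {σ : Type*} {d : ℕ} (hd : 1 ≤ d) {f : MvPolynomial σ ℂ}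
    {G : MvPolynomial σ (LaurentSeries ℂ)} (h : ApproxTo G f) :
    ApproxTo (MvPolynomial.map (St14.Phi hd : LaurentSeries ℂ →+* LaurentSeries ℂ) G) f := by
  constructor
  · intro m k hk
    rw [MvPolynomial.coeff_map]
    by_cases hdk : (d : ℤ) ∣ k
    · obtain ⟨b, rfl⟩ := hdk
      rw [St14.Phi_coeff_mul]
      refine h.1 m b ?_
      by_contra hb
      push_neg at hb
      have hd' : (0:ℤ) < d := by exact_mod_cast hd
      nlinarith
    · exact St14.Phi_coeff_not_dvd hd _ _ hdk
  · intro m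
    rw [MvPolynomial.coeff_map]
    have h0 : (0:ℤ) = (d : ℤ) * 0 := by ring
    rw [h0, St14.Phi_coeff_mul]
    exact h.2 m

set_option synthInstance.maxHeartbeats 1000000 in
/-- If a homogeneous `f` of degree `d ≥ 1` is approximated by a sum of `s` powers of
affine linear forms over `ℂ((ε))`, then its border Waring rank is at most `s`. -/
theorem statement14 {n d s : ℕ} (f : MvPolynomial (Fin n) ℂ) (hf : f.IsHomogeneous d)
    (hd : 1 ≤ d)
    (ℓ : Fin s → MvPolynomial (Fin n) (LaurentSeries ℂ)) (e : Fin s → ℕ)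
    (haff : ∀ i, (ℓ i).totalDegree ≤ 1)
    (happrox : ApproxTo (∑ i, ℓ i ^ e i) f) :
    borderWaringRank f d ≤ s := by
  classical
  have hdecomp : ∀ i, ℓ i = C ((ℓ i).coeff 0) + homogeneousComponent 1 (ℓ i) :=
    fun i => St14.affine_decomp _ (haff i)
  set m : Fin s → MvPolynomial (Fin n) (LaurentSeries ℂ) :=
    fun i => homogeneousComponent 1 (ℓ i) with hm
  set c : Fin s → LaurentSeries ℂ := fun i =>
    if d ≤ e i then ((e i).choose d : LaurentSeries ℂ) * ((ℓ i).coeff 0) ^ (e i - d) else 0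
    with hc
  have hH : homogeneousComponent d (∑ i, ℓ i ^ e i) = ∑ i, C (c i) * (m i) ^ d := by
    rw [map_sum]
    refine Finset.sum_congr rfl fun i _ => ?_
    conv_lhs => rw [hdecomp i]
    exact St14.hc_pow _ _ (homogeneousComponent_isHomogeneous 1 (ℓ i)) (e i) d
  choose r hr using fun i => St14.Phi_root hd (c i)
  set L : Fin s → MvPolynomial (Fin n) (LaurentSeries ℂ) :=
    fun i => C (r i) * MvPolynomial.map (St14.Phi hd) (m i) with hL
  have hLhom : ∀ i, (L i).IsHomogeneous 1 := fun i =>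
    (St14.ishomog_map (homogeneousComponent_isHomogeneous 1 (ℓ i)) _).C_mul _
  have hsum : ∑ i, L i ^ d
      = MvPolynomial.map (St14.Phi hd) (homogeneousComponent d (∑ i, ℓ i ^ e i)) := by
    rw [hH, map_sum]
    refine Finset.sum_congr rfl fun i _ => ?_
    rw [hL, mul_pow, ← C_pow, hr i, map_mul, MvPolynomial.map_C, map_pow]
  have happ : ApproxTo (∑ i, L i ^ d) f := by
    rw [hsum]
    exact approx_map hd (approx_hc hf happrox)
  exact Nat.sInf_le ⟨L, hLhom, happ⟩
end
end

section
/- (Interpolation.) Let f ∈ ℂ[x_1,…,x_n] be a polynomial of degree d (not necessarily homogeneous) and let γ_0, …, γ_d ∈ ℂ be distinct. Suppose that for each i = 0,…,d the substituted polynomial f(γ_i, x_2, …, x_n) belongs to the border class Σ^[s]Λ^[e]Σ. Then f belongs to the border class Σ^[s(d+1)^3]Λ^[e+d]Σ. -/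
open MvPolynomial

noncomputable section

/-- Membership in the border class `Σ^[s]Λ^[e]Σ`: `g` is approximated by a sum of `s`
powers, with exponents at most `e`, of affine linear forms over `ℂ((ε))`. -/
def MemBorderSLS {N : ℕ} (g : MvPolynomial (Fin N) ℂ) (s e : ℕ) : Prop :=
  ∃ (L : Fin s → MvPolynomial (Fin N) (LaurentSeries ℂ)) (E : Fin s → ℕ),
    (∀ i, (L i).totalDegree ≤ 1) ∧ (∀ i, E i ≤ e) ∧ ApproxTo (∑ i, L i ^ E i) g

set_option linter.unusedSectionVars false

namespace Interp

abbrev RR := LaurentSeries ℂ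

def sgl (z : ℤ) (r : ℂ) : RR := HahnSeries.single z r

lemma hahn_sum_coeff {ι : Type*} (s : Finset ι) (f : ι → RR) (k : ℤ) :
    (∑ i ∈ s, f i).coeff k = ∑ i ∈ s, (f i).coeff k := by
  classical
  induction s using Finset.induction with
  | empty => simp
  | insert _ _ h ih => simp [Finset.sum_insert h, HahnSeries.coeff_add, ih]

variable {σ : Type*} [DecidableEq σ]

def OAL (q : ℤ) (F : MvPolynomial σ RR) : Prop :=
  ∀ (m : σ →₀ ℕ) (k : ℤ), k < q → (F.coeff m).coeff k = 0

lemma OAL.mono {q q' : ℤ} {F : MvPolynomial σ RR} (h : q' ≤ q) (hF : OAL q F) : OAL q' F :=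
  fun m k hk => hF m k (lt_of_lt_of_le hk h)

lemma OAL.zero (q : ℤ) : OAL q (0 : MvPolynomial σ RR) := by
  intro m k _; simp

lemma OAL.add {q : ℤ} {F G : MvPolynomial σ RR} (hF : OAL q F) (hG : OAL q G) :
    OAL q (F + G) := by
  intro m k hk
  rw [MvPolynomial.coeff_add, HahnSeries.coeff_add, hF m k hk, hG m k hk, add_zero]

lemma OAL.sum {ι : Type*} {q : ℤ} (s : Finset ι) (F : ι → MvPolynomial σ RR)
    (h : ∀ i ∈ s, OAL q (F i)) : OAL q (∑ i ∈ s, F i) := by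
  classical
  induction s using Finset.induction with
  | empty => simpa using OAL.zero q
  | insert _ _ hns ih =>
    rw [Finset.sum_insert hns]
    exact (h _ (Finset.mem_insert_self _ _)).add
      (ih fun i hi => h i (Finset.mem_insert_of_mem hi))

lemma hahn_mul_low {x y : RR} {q r : ℤ} (hx : ∀ k < q, x.coeff k = 0)
    (hy : ∀ k < r, y.coeff k = 0) : ∀ k < q + r, (x * y).coeff k = 0 := by
  intro k hk
  rw [HahnSeries.coeff_mul]
  apply Finset.sum_eq_zero
  rintro ⟨i, j⟩ hij
  rw [Finset.mem_addAntidiagonal] at hij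
  obtain ⟨_, _, h3⟩ := hij
  rcases lt_or_ge i q with h | h
  · rw [hx i h, zero_mul]
  · rw [hy j (by omega), mul_zero]

lemma OAL.mul {q r : ℤ} {F G : MvPolynomial σ RR} (hF : OAL q F) (hG : OAL r G) :
    OAL (q + r) (F * G) := by
  intro m k hk
  rw [MvPolynomial.coeff_mul, hahn_sum_coeff]
  apply Finset.sum_eq_zero
  intro x _
  exact hahn_mul_low (hF x.1) (hG x.2) k hk

lemma OAL.pow {q : ℤ} {F : MvPolynomial σ RR} (hF : OAL q F) (p : ℕ) :
    OAL ((p : ℤ) * q) (F ^ p) := by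
  induction p with
  | zero =>
    intro m k hk
    simp only [Nat.cast_zero, zero_mul] at hk
    rw [pow_zero]
    rw [MvPolynomial.coeff_one]
    split_ifs
    · exact HahnSeries.coeff_single_of_ne (by omega)
    · simp
  | succ p ih =>
    have := ih.mul hF
    rw [pow_succ]
    exact this.mono (by push_cast; ring_nf; omega)

lemma OAL.sglC (z : ℤ) (r : ℂ) : OAL z (C (sgl z r) : MvPolynomial σ RR) := by
  intro m k hk
  rw [MvPolynomial.coeff_C]
  split_ifs
  · exact HahnSeries.coeff_single_of_ne (by omega)
  · simp

lemma OAL.CC (a : ℂ) : OAL 0 (C (HahnSeries.C a) : MvPolynomial σ RR) :=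
  OAL.sglC 0 a

lemma OAL.X (j : σ) : OAL 0 (X j : MvPolynomial σ RR) := by
  intro m k hk
  rw [MvPolynomial.coeff_X']
  split_ifs
  · exact HahnSeries.coeff_single_of_ne (by omega)
  · simp

lemma hasRegular_iff_OAL (F : MvPolynomial σ RR) : HasRegularCoeffs F ↔ OAL 0 F := Iff.rfl

lemma hahn_mul_coeff_zero {x y : RR} (hx : ∀ k < (0:ℤ), x.coeff k = 0)
    (hy : ∀ k < (0:ℤ), y.coeff k = 0) : (x * y).coeff 0 = x.coeff 0 * y.coeff 0 := by
  rw [HahnSeries.coeff_mul]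
  rw [Finset.sum_eq_single ((0 : ℤ), (0 : ℤ))]
  · rintro ⟨i, j⟩ hij hne
    rw [Finset.mem_addAntidiagonal] at hij
    obtain ⟨_, _, h3⟩ := hij
    rcases lt_trichotomy i 0 with h | h | h
    · rw [hx i h, zero_mul]
    · exfalso; exact hne (by simp only [Prod.ext_iff]; omega)
    · rw [hy j (by omega), mul_zero]
  · intro h
    rw [Finset.mem_addAntidiagonal] at h
    by_cases h0 : x.coeff 0 = 0
    · rw [h0, zero_mul]
    · have hy0 : y.coeff 0 = 0 := by
        by_contra hy0
        exact h ⟨h0, hy0, add_zero 0⟩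
      rw [hy0, mul_zero]

lemma approx_add {F G : MvPolynomial σ RR} {f g : MvPolynomial σ ℂ}
    (hF : ApproxTo F f) (hG : ApproxTo G g) : ApproxTo (F + G) (f + g) := by
  refine ⟨OAL.add (q := 0) hF.1 hG.1, fun m => ?_⟩
  rw [MvPolynomial.coeff_add, HahnSeries.coeff_add, hF.2 m, hG.2 m, MvPolynomial.coeff_add]

lemma approx_zero : ApproxTo (0 : MvPolynomial σ RR) (0 : MvPolynomial σ ℂ) := by
  exact ⟨OAL.zero 0, fun m => by simp⟩

lemma approx_sum {ι : Type*} (s : Finset ι) (F : ι → MvPolynomial σ RR)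
    (f : ι → MvPolynomial σ ℂ) (h : ∀ i ∈ s, ApproxTo (F i) (f i)) :
    ApproxTo (∑ i ∈ s, F i) (∑ i ∈ s, f i) := by
  classical
  induction s using Finset.induction with
  | empty => simpa using approx_zero
  | insert _ _ hns ih =>
    rw [Finset.sum_insert hns, Finset.sum_insert hns]
    exact approx_add (h _ (Finset.mem_insert_self _ _))
      (ih fun i hi => h i (Finset.mem_insert_of_mem hi))

lemma approx_mul {F G : MvPolynomial σ RR} {f g : MvPolynomial σ ℂ}
    (hF : ApproxTo F f) (hG : ApproxTo G g) : ApproxTo (F * G) (f * g) := by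
  refine ⟨(hasRegular_iff_OAL _).mpr (by simpa using (OAL.mul (q := 0) (r := 0) hF.1 hG.1)), fun m => ?_⟩
  rw [MvPolynomial.coeff_mul, hahn_sum_coeff, MvPolynomial.coeff_mul]
  apply Finset.sum_congr rfl
  intro x _
  rw [hahn_mul_coeff_zero (hF.1 x.1) (hG.1 x.2), hF.2, hG.2]

lemma approx_map (f : MvPolynomial σ ℂ) :
    ApproxTo (MvPolynomial.map (HahnSeries.C : ℂ →+* RR) f) f := by
  constructor
  · intro m k hk
    rw [MvPolynomial.coeff_map]
    exact HahnSeries.coeff_single_of_ne (by omega)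
  · intro m
    rw [MvPolynomial.coeff_map]
    exact HahnSeries.coeff_single_same 0 _

lemma approx_of_OAL_one {F : MvPolynomial σ RR} (h : OAL 1 F) :
    ApproxTo F (0 : MvPolynomial σ ℂ) := by
  refine ⟨h.mono (by omega), fun m => ?_⟩
  rw [h m 0 (by omega)]
  simp

lemma exists_pole_bound (F : MvPolynomial σ RR) : ∃ w : ℕ, OAL (-(w : ℤ)) F := by
  obtain ⟨M, hM⟩ := (F.support.image fun m => -(F.coeff m).order).exists_le
  refine ⟨M.toNat, fun m k hk => ?_⟩
  by_cases hm : F.coeff m = 0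
  · rw [hm]; simp
  · have hmem : m ∈ F.support := by rwa [MvPolynomial.mem_support_iff]
    have h1 := hM _ (Finset.mem_image_of_mem _ hmem)
    have h2 : M ≤ (M.toNat : ℤ) := Int.self_le_toNat M
    exact HahnSeries.coeff_eq_zero_of_lt_order (by omega)

lemma vandermonde_inv {N : ℕ} (v : Fin N → ℂ) (hv : Function.Injective v) :
    ∃ b : Fin N → Fin N → ℂ, ∀ k j : Fin N,
      (∑ i, b k i * v i ^ (j : ℕ)) = if k = j then 1 else 0 := by
  set V := Matrix.vandermonde v with hV
  have hdet : V.det ≠ 0 := by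
    rw [hV, Matrix.det_vandermonde]
    apply Finset.prod_ne_zero_iff.mpr
    intro i _
    apply Finset.prod_ne_zero_iff.mpr
    intro j hj
    rw [Finset.mem_Ioi] at hj
    exact sub_ne_zero_of_ne fun h => absurd (hv h) (ne_of_gt hj)
  refine ⟨fun k i => V⁻¹ k i, fun k j => ?_⟩
  have h := Matrix.nonsing_inv_mul V (isUnit_iff_ne_zero.mpr hdet)
  have h2 := congrFun (congrFun h k) j
  rw [Matrix.mul_apply] at h2
  simpa [Matrix.one_apply, hV, Matrix.vandermonde] using h2

lemma totalDegree_C_mul_le (c : RR) (G : MvPolynomial σ RR) :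
    (C c * G).totalDegree ≤ G.totalDegree :=
  le_trans (MvPolynomial.totalDegree_mul _ _) (by simp [MvPolynomial.totalDegree_C])

section Interpolation
variable {n : ℕ}

abbrev AA (n : ℕ) := MvPolynomial (Fin (n+1)) ℂ

def τ (n : ℕ) : AA n →ₐ[ℂ] Polynomial (AA n) :=
  MvPolynomial.aeval (fun j => if j = 0 then Polynomial.X else Polynomial.C (X j))

lemma eval_tau (f : AA n) (y : AA n) :
    Polynomial.eval y (τ n f) = MvPolynomial.aeval (fun j => if j = 0 then y else X j) f := by
  induction f using MvPolynomial.induction_on with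
  | C a =>
      rw [show (τ n) (C a) = Polynomial.C (C a) by
        rw [τ, MvPolynomial.aeval_C, Polynomial.algebraMap_apply]
        rfl]
      rw [Polynomial.eval_C, MvPolynomial.aeval_C]
      rfl
  | add p q hp hq => rw [map_add, Polynomial.eval_add, hp, hq, map_add]
  | mul_X p j hp =>
      rw [map_mul, Polynomial.eval_mul, hp, map_mul]
      congr 1
      rw [τ, MvPolynomial.aeval_X, MvPolynomial.aeval_X]
      split_ifs <;> simp

lemma natDegree_tau_monomial (m : Fin (n+1) →₀ ℕ) (c : ℂ) :
    ((τ n) (monomial m c)).natDegree ≤ m.sum fun _ e => e := by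
  rw [MvPolynomial.monomial_eq, map_mul]
  refine le_trans Polynomial.natDegree_mul_le ?_
  have hC : ((τ n) (C c : AA n)).natDegree = 0 := by
    rw [show (τ n) (C c : AA n) = Polynomial.C (C c) by
      rw [τ, MvPolynomial.aeval_C, Polynomial.algebraMap_apply]; rfl]
    exact Polynomial.natDegree_C _
  rw [hC, zero_add]
  rw [Finsupp.prod, map_prod]
  refine le_trans (Polynomial.natDegree_prod_le _ _) ?_
  rw [Finsupp.sum]
  apply Finset.sum_le_sum
  intro j _
  rw [map_pow, τ, MvPolynomial.aeval_X]
  split_ifs with h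
  · subst h
    simpa using le_of_eq (Polynomial.natDegree_X_pow _)
  · simp [Polynomial.natDegree_pow]

lemma natDegree_tau_le (f : AA n) : ((τ n) f).natDegree ≤ f.totalDegree := by
  conv_lhs => rw [f.as_sum]
  rw [map_sum]
  apply Polynomial.natDegree_sum_le_of_forall_le
  intro m hm
  exact le_trans (natDegree_tau_monomial m _) (MvPolynomial.le_totalDegree hm)

lemma interp_decomp {d : ℕ} (f : AA n) (hdeg : f.totalDegree ≤ d)
    (γ : Fin (d+1) → ℂ) (hγ : Function.Injective γ) :
    ∃ b : Fin (d+1) → Fin (d+1) → ℂ,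
      f = ∑ i, ∑ k : Fin (d+1), C (b i k) * X 0 ^ (k : ℕ) *
        (MvPolynomial.aeval (fun j : Fin (n+1) => if j = 0 then C (γ i) else X j) f) := by
  obtain ⟨b, hb⟩ := vandermonde_inv γ hγ
  refine ⟨fun i k => b k i, ?_⟩
  set p := (τ n) f with hp
  have hdp : p.natDegree < d + 1 :=
    lt_of_le_of_lt (le_trans (natDegree_tau_le f) hdeg) (Nat.lt_succ_self d)
  have hXid : (fun j : Fin (n+1) => if j = 0 then (X 0 : AA n) else X j) = X := by
    funext j
    split_ifs with h
    · rw [h]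
    · rfl
  have hf : f = ∑ k : Fin (d+1), X 0 ^ (k : ℕ) * p.coeff (k : ℕ) := by
    have h1 := eval_tau f (X 0)
    rw [hXid, MvPolynomial.aeval_X_left_apply] at h1
    rw [← h1, Polynomial.eval_eq_sum_range' hdp, Fin.sum_univ_eq_sum_range
      (fun k => X 0 ^ k * p.coeff k) (d+1)]
    apply Finset.sum_congr rfl
    intro k _
    ring
  have hg : ∀ i, (MvPolynomial.aeval
        (fun j : Fin (n+1) => if j = 0 then C (γ i) else X j) f : AA n)
      = ∑ k : Fin (d+1), C (γ i ^ (k : ℕ)) * p.coeff (k : ℕ) := by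
    intro i
    have h1 := eval_tau f (C (γ i))
    rw [← h1, Polynomial.eval_eq_sum_range' hdp, Fin.sum_univ_eq_sum_range
      (fun k => C (γ i ^ k) * p.coeff k) (d+1)]
    apply Finset.sum_congr rfl
    intro k _
    rw [← MvPolynomial.C_pow]
    ring
  symm
  calc (∑ i, ∑ k : Fin (d+1), C (b k i) * X 0 ^ (k : ℕ) *
        (MvPolynomial.aeval (fun j : Fin (n+1) => if j = 0 then C (γ i) else X j) f))
      = ∑ i, ∑ k : Fin (d+1), ∑ k' : Fin (d+1),
          C (b k i * γ i ^ (k' : ℕ)) * (X 0 ^ (k : ℕ) * p.coeff (k' : ℕ)) := by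
        apply Finset.sum_congr rfl; intro i _
        apply Finset.sum_congr rfl; intro k _
        rw [hg i, Finset.mul_sum]
        apply Finset.sum_congr rfl; intro k' _
        rw [MvPolynomial.C_mul]
        ring
    _ = ∑ k : Fin (d+1), ∑ k' : Fin (d+1),
          C (∑ i, b k i * γ i ^ (k' : ℕ)) * (X 0 ^ (k : ℕ) * p.coeff (k' : ℕ)) := by
        rw [Finset.sum_comm]
        apply Finset.sum_congr rfl; intro k _
        rw [Finset.sum_comm]
        apply Finset.sum_congr rfl; intro k' _
        rw [map_sum, Finset.sum_mul]
    _ = ∑ k : Fin (d+1), ∑ k' : Fin (d+1),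
          (if k = k' then (1 : AA n) else 0) * (X 0 ^ (k : ℕ) * p.coeff (k' : ℕ)) := by
        apply Finset.sum_congr rfl; intro k _
        apply Finset.sum_congr rfl; intro k' _
        rw [hb k k']
        split_ifs <;> simp
    _ = ∑ k : Fin (d+1), X 0 ^ (k : ℕ) * p.coeff (k : ℕ) := by
        apply Finset.sum_congr rfl; intro k _
        simp only [ite_mul, zero_mul]
        rw [Finset.sum_ite_eq]
        simp
    _ = f := hf.symm

end Interpolation

def ez (z : ℤ) : MvPolynomial σ RR := C (sgl z 1)

def cc (r : ℂ) : MvPolynomial σ RR := C (HahnSeries.C r)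

lemma ez_mul (z z' : ℤ) : (ez z : MvPolynomial σ RR) * ez z' = ez (z + z') := by
  simp only [ez, sgl, ← map_mul, HahnSeries.single_mul_single, one_mul]

lemma ez_pow (z : ℤ) (j : ℕ) : (ez z : MvPolynomial σ RR) ^ j = ez ((j : ℤ) * z) := by
  simp only [ez, sgl, ← map_pow, HahnSeries.single_pow, one_pow, nsmul_eq_mul]

lemma ez_zero : (ez 0 : MvPolynomial σ RR) = 1 := by
  simp only [ez, sgl, HahnSeries.single_zero_one, map_one]

lemma cc_mul (r r' : ℂ) : (cc r : MvPolynomial σ RR) * cc r' = cc (r * r') := by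
  simp only [cc, ← map_mul]

lemma cc_pow (r : ℂ) (j : ℕ) : (cc r : MvPolynomial σ RR) ^ j = cc (r ^ j) := by
  simp only [cc, ← map_pow]

lemma cc_sum {ι : Type*} (s : Finset ι) (r : ι → ℂ) :
    (∑ i ∈ s, (cc (r i) : MvPolynomial σ RR)) = cc (∑ i ∈ s, r i) := by
  simp only [cc, ← map_sum]

lemma cc_zero : (cc 0 : MvPolynomial σ RR) = 0 := by simp [cc]

lemma cc_natCast (j : ℕ) : ((j : ℕ) : MvPolynomial σ RR) = cc (j : ℂ) := by
  rw [← map_natCast (C : RR →+* MvPolynomial σ RR) j,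
    ← map_natCast (HahnSeries.C : ℂ →+* RR) j]
  rfl

lemma OAL_ez (z : ℤ) : OAL z (ez z : MvPolynomial σ RR) := OAL.sglC z 1

lemma OAL_cc (r : ℂ) : OAL 0 (cc r : MvPolynomial σ RR) := OAL.CC r

lemma OAL_natCast (j : ℕ) : OAL 0 ((j : ℕ) : MvPolynomial σ RR) := by
  rw [cc_natCast]; exact OAL_cc _

lemma approx_cc (a : ℂ) : ApproxTo (cc a : MvPolynomial σ RR) (C a) := by
  have h := approx_map (C a : MvPolynomial σ ℂ)
  rwa [MvPolynomial.map_C] at h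

lemma pow_expand (L : MvPolynomial σ RR) (z1 z2 : ℤ) (b τ0 : ℂ) (D : ℕ) (j : σ) :
    (ez z1 * cc b * (L + ez z2 * cc τ0 * X j)) ^ D
      = ∑ p ∈ Finset.range (D + 1),
          ez ((D : ℤ) * z1) * ez (((D - p : ℕ) : ℤ) * z2) * cc (b ^ D * τ0 ^ (D - p)) *
            (L ^ p * X j ^ (D - p) * ((D.choose p : ℕ) : MvPolynomial σ RR)) := by
  rw [mul_pow, mul_pow, add_pow, Finset.mul_sum]
  refine Finset.sum_congr rfl fun p hp => ?_
  rw [mul_pow, mul_pow, ez_pow, ez_pow, cc_pow, cc_pow, ← cc_mul]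
  ring

lemma deg_aux (c1 c2 c3 c4 : RR) (L : MvPolynomial σ RR) (hL : L.totalDegree ≤ 1) (j : σ) :
    (C c1 * C c2 * (L + C c3 * C c4 * X j)).totalDegree ≤ 1 := by
  refine le_trans (MvPolynomial.totalDegree_mul _ _) ?_
  have h1 : (C c1 * C c2 : MvPolynomial σ RR).totalDegree ≤ 0 :=
    le_trans (MvPolynomial.totalDegree_mul _ _) (by simp [MvPolynomial.totalDegree_C])
  have h2 : (L + C c3 * C c4 * X j).totalDegree ≤ 1 := by
    refine le_trans (MvPolynomial.totalDegree_add _ _) (max_le hL ?_)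
    refine le_trans (MvPolynomial.totalDegree_mul _ _) ?_
    have h3 : (C c3 * C c4 : MvPolynomial σ RR).totalDegree ≤ 0 :=
      le_trans (MvPolynomial.totalDegree_mul _ _) (by simp [MvPolynomial.totalDegree_C])
    have h4 := MvPolynomial.totalDegree_X (R := RR) j
    omega
  omega

lemma key_main {n : ℕ} (e d w E k : ℕ) (hE : E ≤ e) (hk : k ≤ d) (hD : 1 ≤ E + k)
    (L : MvPolynomial (Fin (n+1)) RR) (hL : L.totalDegree ≤ 1) (hLw : OAL (-(w : ℤ)) L)
    (a : ℂ) (c β : Fin (k+1) → ℂ)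
    (hc : ∀ j : ℕ, j ≤ k →
      (∑ m : Fin (k+1), c m * (((m : ℕ) : ℂ) + 1) ^ j) = if j = k then 1 else 0)
    (hβ : ∀ m, β m ^ (E + k) = a * c m / ((E + k).choose k : ℂ)) :
    ∃ (A : Fin (d+1) → MvPolynomial (Fin (n+1)) RR) (Ex : Fin (d+1) → ℕ)
      (J : MvPolynomial (Fin (n+1)) RR),
      (∀ m, (A m).totalDegree ≤ 1) ∧ (∀ m, Ex m ≤ e + d) ∧ OAL 1 J ∧
      ∑ m, A m ^ Ex m = cc a * X 0 ^ k * L ^ E + J := by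
  set D := E + k with hD2
  set Q := w * (e + d) + 1 with hQ2
  set z1 : ℤ := -((Q * k : ℕ) : ℤ) with hz1
  set z2 : ℤ := ((Q * D : ℕ) : ℤ) with hz2
  set A0 : Fin (k+1) → MvPolynomial (Fin (n+1)) RR :=
    fun m => ez z1 * cc (β m) * (L + ez z2 * cc (((m : ℕ) : ℂ) + 1) * X 0) with hA0
  set F0 : ℕ → MvPolynomial (Fin (n+1)) RR :=
    fun m' => if h : m' < k + 1 then A0 ⟨m', h⟩ else 0 with hF0
  set Sp : ℕ → ℂ :=
    fun p => ∑ m : Fin (k+1), β m ^ D * (((m : ℕ) : ℂ) + 1) ^ (D - p) with hSp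
  set T : ℕ → MvPolynomial (Fin (n+1)) RR :=
    fun p => ez ((D : ℤ) * z1) * ez (((D - p : ℕ) : ℤ) * z2) * cc (Sp p) *
      (L ^ p * X 0 ^ (D - p) * ((D.choose p : ℕ) : MvPolynomial (Fin (n+1)) RR)) with hT
  have hch0 : ((D.choose k : ℕ) : ℂ) ≠ 0 :=
    Nat.cast_ne_zero.mpr (Nat.choose_pos (by omega)).ne'
  refine ⟨fun m => F0 (m : ℕ), fun _ => D,
    ∑ p ∈ (Finset.range (D + 1)).erase E, T p, ?_, ?_, ?_, ?_⟩
  · intro m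
    by_cases h : (m : ℕ) < k + 1
    · simp only [hF0, dif_pos h, hA0, ez, cc]
      exact deg_aux _ _ _ _ L hL 0
    · simp only [hF0, dif_neg h]
      simp
  · intro m
    simp only
    omega
  · apply OAL.sum
    intro p hp
    rw [Finset.mem_erase, Finset.mem_range] at hp
    obtain ⟨hpE, hpD⟩ := hp
    rcases Nat.lt_or_ge p E with hlt | hge
    · -- junk term, positive order
      have hineqN : w * p + 1 + D * (Q * k) ≤ (D - p) * (Q * D) := by
        have e1 : D * (Q * k) = Q * D * k := by ring
        have e2 : Q * D ≤ Q * D * (E - p) := Nat.le_mul_of_pos_right _ (by omega)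
        have e3 : Q * D * (E - p) + Q * D * k = (D - p) * (Q * D) := by
          have e4 : D - p = (E - p) + k := by omega
          rw [e4]; ring
        have e5 : w * p + 1 ≤ Q := by
          have e6 : w * p ≤ w * (e + d) := Nat.mul_le_mul_left w (by omega)
          omega
        have e7 : Q ≤ Q * D := Nat.le_mul_of_pos_right _ (by omega)
        linarith
      have hZ : ((w * p + 1 + D * (Q * k) : ℕ) : ℤ) ≤ (((D - p) * (Q * D) : ℕ) : ℤ) :=
        Nat.cast_le.mpr hineqN
      simp only [hT]
      refine OAL.mono ?_
        ((((OAL_ez ((D : ℤ) * z1)).mul (OAL_ez (((D - p : ℕ) : ℤ) * z2))).mul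
          (OAL_cc (Sp p))).mul
          (((hLw.pow p).mul ((OAL.X 0).pow (D - p))).mul (OAL_natCast (D.choose p))))
      rw [hz1, hz2]
      push_cast [Nat.cast_sub (show p ≤ D by omega)] at hZ ⊢
      ring_nf at hZ ⊢
      linarith
    · -- vanishing term
      have h1 : ∀ m : Fin (k+1), β m ^ D * (((m : ℕ) : ℂ) + 1) ^ (D - p) =
          (a / ((D.choose k : ℕ) : ℂ)) * (c m * (((m : ℕ) : ℂ) + 1) ^ (D - p)) := by
        intro m; rw [hβ m]; ring
      have hS0 : Sp p = 0 := by
        simp only [hSp]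
        rw [Finset.sum_congr rfl (fun m _ => h1 m), ← Finset.mul_sum,
          hc (D - p) (by omega), if_neg (by omega), mul_zero]
      simp only [hT, hS0, cc_zero, mul_zero, zero_mul]
      exact OAL.zero 1
  · -- the sum identity
    have hstep : ∀ m : Fin (k+1), A0 m ^ D = ∑ p ∈ Finset.range (D+1),
        ez ((D : ℤ) * z1) * ez (((D - p : ℕ) : ℤ) * z2) *
          cc (β m ^ D * (((m : ℕ) : ℂ) + 1) ^ (D - p)) *
          (L ^ p * X 0 ^ (D - p) * ((D.choose p : ℕ) : MvPolynomial (Fin (n+1)) RR)) := by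
      intro m
      simp only [hA0]
      exact pow_expand L z1 z2 (β m) _ D 0
    dsimp only
    calc (∑ m : Fin (d+1), F0 (m : ℕ) ^ D)
        = ∑ m' ∈ Finset.range (d+1), F0 m' ^ D :=
          Fin.sum_univ_eq_sum_range (fun m' => F0 m' ^ D) (d+1)
      _ = ∑ m' ∈ Finset.range (k+1), F0 m' ^ D := by
          refine (Finset.sum_subset (Finset.range_subset_range.mpr (by omega)) ?_).symm
          intro x _ hx2
          rw [Finset.mem_range] at hx2
          simp only [hF0, dif_neg (show ¬ x < k + 1 by omega)]
          exact zero_pow (by omega)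
      _ = ∑ m : Fin (k+1), A0 m ^ D := by
          rw [← Fin.sum_univ_eq_sum_range (fun m' => F0 m' ^ D) (k+1)]
          refine Finset.sum_congr rfl fun m _ => ?_
          congr 1
          simp only [hF0, dif_pos m.isLt]
      _ = ∑ p ∈ Finset.range (D+1), ∑ m : Fin (k+1),
            ez ((D : ℤ) * z1) * ez (((D - p : ℕ) : ℤ) * z2) *
              cc (β m ^ D * (((m : ℕ) : ℂ) + 1) ^ (D - p)) *
              (L ^ p * X 0 ^ (D - p) * ((D.choose p : ℕ) : MvPolynomial (Fin (n+1)) RR)) := by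
          rw [Finset.sum_congr rfl fun m _ => hstep m]
          exact Finset.sum_comm
      _ = ∑ p ∈ Finset.range (D+1), T p := by
          refine Finset.sum_congr rfl fun p _ => ?_
          have h2 : ∀ m : Fin (k+1),
              ez ((D : ℤ) * z1) * ez (((D - p : ℕ) : ℤ) * z2) *
                cc (β m ^ D * (((m : ℕ) : ℂ) + 1) ^ (D - p)) *
                (L ^ p * X 0 ^ (D - p) * ((D.choose p : ℕ) : MvPolynomial (Fin (n+1)) RR)) =
              cc (β m ^ D * (((m : ℕ) : ℂ) + 1) ^ (D - p)) *
                (ez ((D : ℤ) * z1) * ez (((D - p : ℕ) : ℤ) * z2) *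
                 (L ^ p * X 0 ^ (D - p) * ((D.choose p : ℕ) : MvPolynomial (Fin (n+1)) RR))) :=
            fun m => by ring
          rw [Finset.sum_congr rfl fun m _ => h2 m, ← Finset.sum_mul, cc_sum]
          simp only [hT, hSp]
          ring
      _ = T E + ∑ p ∈ (Finset.range (D+1)).erase E, T p :=
          (Finset.add_sum_erase _ T (Finset.mem_range.mpr (by omega))).symm
      _ = cc a * X 0 ^ k * L ^ E + ∑ p ∈ (Finset.range (D+1)).erase E, T p := by
          rw [add_left_inj]
          have hDE : D - E = k := by omega
          have hSpE : Sp E = a / ((D.choose k : ℕ) : ℂ) := by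
            simp only [hSp]
            have h1 : ∀ m : Fin (k+1), β m ^ D * (((m : ℕ) : ℂ) + 1) ^ (D - E) =
                (a / ((D.choose k : ℕ) : ℂ)) * (c m * (((m : ℕ) : ℂ) + 1) ^ (D - E)) := by
              intro m; rw [hβ m]; ring
            rw [Finset.sum_congr rfl (fun m _ => h1 m), ← Finset.mul_sum,
              hc (D - E) (by omega), if_pos hDE, mul_one]
          simp only [hT]
          rw [hSpE, hDE]
          rw [cc_natCast (D.choose E)]
          have hch : ((D.choose E : ℕ) : ℂ) = ((D.choose k : ℕ) : ℂ) := by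
            rw [show D.choose E = D.choose k by
              rw [show E = D - k by omega]; exact Nat.choose_symm (by omega)]
          rw [hch]
          rw [show ez ((D : ℤ) * z1) * ez (((k : ℕ) : ℤ) * z2) = 1 by
            rw [ez_mul, show (D : ℤ) * z1 + ((k : ℕ) : ℤ) * z2 = 0 by
              rw [hz1, hz2]; push_cast; ring, ez_zero]]
          rw [one_mul]
          rw [show (cc (a / ((D.choose k : ℕ) : ℂ)) : MvPolynomial (Fin (n+1)) RR) *
              (L ^ E * X 0 ^ k * cc (((D.choose k : ℕ)) : ℂ)) =
              (cc (a / ((D.choose k : ℕ) : ℂ)) * cc (((D.choose k : ℕ)) : ℂ)) *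
                (L ^ E * X 0 ^ k) from by ring]
          rw [cc_mul, div_mul_cancel₀ a hch0]
          ring

lemma key {n : ℕ} (e d w : ℕ) (L : MvPolynomial (Fin (n+1)) RR)
    (hL : L.totalDegree ≤ 1) (hLw : OAL (-(w : ℤ)) L) (E k : ℕ) (hE : E ≤ e) (hk : k ≤ d)
    (a : ℂ) (hed : 1 ≤ e + d) :
    ∃ (A : Fin (d+1) → MvPolynomial (Fin (n+1)) RR) (Ex : Fin (d+1) → ℕ)
      (J : MvPolynomial (Fin (n+1)) RR),
      (∀ m, (A m).totalDegree ≤ 1) ∧ (∀ m, Ex m ≤ e + d) ∧ OAL 1 J ∧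
      ∑ m, A m ^ Ex m = cc a * X 0 ^ k * L ^ E + J := by
  by_cases hD0 : E + k = 0
  · obtain ⟨hE0, hk0⟩ : E = 0 ∧ k = 0 := by omega
    subst hE0; subst hk0
    refine ⟨fun m => if m = 0 then cc a else 0, fun _ => 1, 0, ?_, ?_, OAL.zero 1, ?_⟩
    · intro m
      dsimp only
      split_ifs
      · simp [cc, MvPolynomial.totalDegree_C]
      · simp
    · intro m; dsimp only; omega
    · simp only [pow_one]
      rw [Finset.sum_ite_eq' Finset.univ (0 : Fin (d+1)) (fun _ => (cc a : MvPolynomial (Fin (n+1)) RR))]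
      simp
  · have htinj : Function.Injective (fun m : Fin (k+1) => ((m : ℕ) : ℂ) + 1) := by
      intro x y hxy
      simp only at hxy
      have h1 : ((x : ℕ) : ℂ) = ((y : ℕ) : ℂ) := by
        exact add_right_cancel hxy
      exact Fin.ext (Nat.cast_injective h1)
    obtain ⟨bv, hbv⟩ := vandermonde_inv _ htinj
    have hc : ∀ j : ℕ, j ≤ k →
        (∑ m : Fin (k+1), bv (Fin.last k) m * (((m : ℕ) : ℂ) + 1) ^ j)
          = if j = k then 1 else 0 := by
      intro j hj
      have h := hbv (Fin.last k) ⟨j, Nat.lt_succ_of_le hj⟩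
      simp only at h
      rw [h]
      split_ifs with h1 h2 h2
      · rfl
      · exfalso; rw [Fin.ext_iff] at h1; simp at h1; omega
      · exfalso; apply h1; rw [Fin.ext_iff]; simp; omega
      · rfl
    have hroot : ∀ m : Fin (k+1),
        ∃ z : ℂ, z ^ (E + k) = a * bv (Fin.last k) m / ((E + k).choose k : ℂ) :=
      fun m => IsAlgClosed.exists_pow_nat_eq _ (by omega)
    choose β hβ using hroot
    exact key_main e d w E k hE hk (by omega) L hL hLw a (bv (Fin.last k)) β hc hβ

end Interp

/-- Interpolation: if `f` has degree `d` and each substitution `f(γᵢ, x₂, …, xₙ)` at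
`d + 1` distinct values `γ₀, …, γ_d` of the first variable lies in the border class
`Σ^[s]Λ^[e]Σ`, then `f` lies in the border class `Σ^[s(d+1)^3]Λ^[e+d]Σ`. -/
theorem statement15 {n d s e : ℕ} (f : MvPolynomial (Fin (n + 1)) ℂ)
    (hdeg : f.totalDegree = d)
    (γ : Fin (d + 1) → ℂ) (hγ : Function.Injective γ)
    (hsub : ∀ i : Fin (d + 1),
      MemBorderSLS
        (aeval (fun j : Fin (n + 1) =>
          if j = 0 then (C (γ i) : MvPolynomial (Fin (n + 1)) ℂ) else X j) f) s e) :
    MemBorderSLS f (s * (d + 1) ^ 3) (e + d) := by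
  classical
  by_cases hed0 : e + d = 0
  · have hd0 : d = 0 := by omega
    have he0 : e = 0 := by omega
    subst hd0; subst he0
    have hfC : f = C (f.coeff 0) := by
      ext m
      rw [MvPolynomial.coeff_C]
      split_ifs with h0
      · rw [← h0]
      · by_contra hne
        have hm : m ∈ f.support := by rwa [MvPolynomial.mem_support_iff]
        have h2 := (MvPolynomial.totalDegree_eq_zero_iff _ f).mp hdeg m hm
        exact h0 (Finsupp.ext fun x => (h2 x).symm)
    have hfg : (aeval (fun j : Fin (n + 1) =>
        if j = 0 then (C (γ 0) : MvPolynomial (Fin (n + 1)) ℂ) else X j)) f = f := by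
      conv_lhs => rw [hfC]
      rw [MvPolynomial.aeval_C, MvPolynomial.algebraMap_eq]
      exact hfC.symm
    have h := hsub 0
    rw [hfg] at h
    rw [show s * (0 + 1) ^ 3 = s by norm_num]
    exact h
  · have hed : 1 ≤ e + d := by omega
    obtain ⟨b, hb⟩ := Interp.interp_decomp f (le_of_eq hdeg) γ hγ
    have hsub' : ∀ i : Fin (d + 1), ∃ (L : Fin s → MvPolynomial (Fin (n + 1)) (Interp.RR))
        (Ef : Fin s → ℕ), (∀ j, (L j).totalDegree ≤ 1) ∧ (∀ j, Ef j ≤ e) ∧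
        ApproxTo (∑ j, L j ^ Ef j)
          (aeval (fun j : Fin (n + 1) =>
            if j = 0 then (C (γ i) : MvPolynomial (Fin (n + 1)) ℂ) else X j) f) := hsub
    choose Lf Ef hLdeg hEle happ using hsub'
    choose w0 hw0 using fun (i : Fin (d + 1)) (j : Fin s) =>
      Interp.exists_pole_bound (Lf i j)
    set W := Finset.univ.sup (fun q : Fin (d + 1) × Fin s => w0 q.1 q.2) with hW
    have hwall : ∀ i j, Interp.OAL (-(W : ℤ)) (Lf i j) := by
      intro i j
      refine (hw0 i j).mono ?_
      have h1 : w0 i j ≤ W :=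
        Finset.le_sup (f := fun q : Fin (d + 1) × Fin s => w0 q.1 q.2)
          (Finset.mem_univ (i, j))
      omega
    have hkey := fun (i : Fin (d + 1)) (j : Fin s) (k : Fin (d + 1)) =>
      Interp.key e d W (Lf i j) (hLdeg i j) (hwall i j) (Ef i j) (k : ℕ) (hEle i j)
        (Fin.is_le k) (b i k) hed
    choose A Ex J hdegA hExle hJ hsumA using hkey
    have hcard : s * (d + 1) ^ 3
        = Fintype.card (Fin (d + 1) × Fin s × Fin (d + 1) × Fin (d + 1)) := by
      simp only [Fintype.card_prod, Fintype.card_fin]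
      ring
    set Φ : Fin (s * (d + 1) ^ 3) ≃ (Fin (d + 1) × Fin s × Fin (d + 1) × Fin (d + 1)) :=
      (finCongr hcard).trans (Fintype.equivFin _).symm with hΦ
    refine ⟨fun v => A (Φ v).1 (Φ v).2.1 (Φ v).2.2.1 (Φ v).2.2.2,
      fun v => Ex (Φ v).1 (Φ v).2.1 (Φ v).2.2.1 (Φ v).2.2.2,
      fun v => hdegA _ _ _ _, fun v => hExle _ _ _ _, ?_⟩
    have hsum2 : (∑ v : Fin (s * (d + 1) ^ 3),
        A (Φ v).1 (Φ v).2.1 (Φ v).2.2.1 (Φ v).2.2.2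
          ^ Ex (Φ v).1 (Φ v).2.1 (Φ v).2.2.1 (Φ v).2.2.2)
        = ∑ q : Fin (d + 1) × Fin s × Fin (d + 1) × Fin (d + 1),
            A q.1 q.2.1 q.2.2.1 q.2.2.2 ^ Ex q.1 q.2.1 q.2.2.1 q.2.2.2 :=
      Equiv.sum_comp Φ
        (fun q => A q.1 q.2.1 q.2.2.1 q.2.2.2 ^ Ex q.1 q.2.1 q.2.2.1 q.2.2.2)
    dsimp only
    rw [hsum2]
    have hsum3 : (∑ q : Fin (d + 1) × Fin s × Fin (d + 1) × Fin (d + 1),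
          A q.1 q.2.1 q.2.2.1 q.2.2.2 ^ Ex q.1 q.2.1 q.2.2.1 q.2.2.2)
        = ∑ i, ∑ j, ∑ k, ∑ m, A i j k m ^ Ex i j k m := by
      simp only [Fintype.sum_prod_type]
    rw [hsum3]
    rw [Finset.sum_congr rfl fun i _ => Finset.sum_congr rfl fun j _ =>
      Finset.sum_congr rfl fun k _ => hsumA i j k]
    rw [Finset.sum_congr rfl fun i _ => Finset.sum_congr rfl fun j _ =>
      Finset.sum_add_distrib]
    rw [Finset.sum_congr rfl fun i (_ : i ∈ Finset.univ) => Finset.sum_add_distrib]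
    rw [Finset.sum_add_distrib]
    have hmain : ∀ i, (∑ j, ∑ k : Fin (d + 1),
          Interp.cc (b i k) * X 0 ^ (k : ℕ) * Lf i j ^ Ef i j)
        = ∑ k : Fin (d + 1), Interp.cc (b i k) * X 0 ^ (k : ℕ) * (∑ j, Lf i j ^ Ef i j) := by
      intro i
      rw [Finset.sum_comm]
      refine Finset.sum_congr rfl fun k _ => ?_
      rw [Finset.mul_sum]
    rw [Finset.sum_congr rfl fun i (_ : i ∈ Finset.univ) => hmain i]
    have h1 : ApproxTo (∑ i, ∑ k : Fin (d + 1),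
          Interp.cc (b i k) * X 0 ^ (k : ℕ) * (∑ j, Lf i j ^ Ef i j))
        (∑ i, ∑ k : Fin (d + 1), C (b i k) * X 0 ^ (k : ℕ) *
          (aeval (fun j : Fin (n + 1) =>
            if j = 0 then (C (γ i) : MvPolynomial (Fin (n + 1)) ℂ) else X j) f)) := by
      refine Interp.approx_sum _ _ _ fun i _ => Interp.approx_sum _ _ _ fun k _ => ?_
      refine Interp.approx_mul (Interp.approx_mul (Interp.approx_cc _) ?_) (happ i)
      have h2 := Interp.approx_map (X 0 ^ (k : ℕ) : MvPolynomial (Fin (n + 1)) ℂ)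
      rwa [map_pow, MvPolynomial.map_X] at h2
    have h2 : ApproxTo (∑ i, ∑ j, ∑ k : Fin (d + 1), J i j k)
        (0 : MvPolynomial (Fin (n + 1)) ℂ) := by
      apply Interp.approx_of_OAL_one
      exact Interp.OAL.sum _ _ fun i _ => Interp.OAL.sum _ _ fun j _ =>
        Interp.OAL.sum _ _ fun k _ => hJ i j k
    have h3 := Interp.approx_add h1 h2
    rw [add_zero, ← hb] at h3
    exact h3
end
end
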